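/- arXiv:1203.2670 — 9 statements merged into one kernel-verified Lean document; each statement's English description precedes it below -/
import Mathlib

section
/- If a positive integer n admits a Wilf partition with exactly r distinct parts, then r ≤ (6n)^{1/3}, i.e., r³ ≤ 6n. -/
open Finset

lemma helper1 : ∀ N : ℕ, ∀ k ≤ N, 2 * ∑ j ∈ range N, (k - j) = k * (k + 1) := by
  intro N
  induction N with
  | zero => intro k hk; interval_cases k; simp
  | succ N ih =>
    intro k hk
    by_cases h : k ≤ N
    · rw [Finset.sum_range_succ]
      have h0 : k - N = 0 := by omega
      rw [h0, add_zero]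
      exact ih k h
    · have hk1 : k = N + 1 := by omega
      rw [Finset.sum_range_succ']
      have hterm : ∑ j ∈ range N, (k - (j + 1)) = ∑ j ∈ range N, ((k - 1) - j) :=
        Finset.sum_congr rfl fun j _ => by omega
      rw [hterm, Nat.mul_add, ih (k - 1) (by omega)]
      have h1 : k - 1 + 1 = k := by omega
      rw [h1, Nat.sub_zero]
      cases k with
      | zero => omega
      | succ k' => simp only [Nat.add_sub_cancel]; ring

lemma helper2 (r : ℕ) : 3 * ∑ j ∈ range r, (j + 1) * (j + 2) = r * (r + 1) * (r + 2) := by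
  induction r with
  | zero => simp
  | succ r ih => rw [Finset.sum_range_succ, Nat.mul_add, ih]; ring

lemma helper3 (r : ℕ) :
    6 * ∑ ab ∈ range r ×ˢ range r, (r - ab.1 - ab.2) = r * (r + 1) * (r + 2) := by
  rw [Finset.sum_product]
  have step1 : ∑ a ∈ range r, 2 * ∑ b ∈ range r, (r - a - b)
      = ∑ a ∈ range r, (r - a) * (r - a + 1) :=
    Finset.sum_congr rfl fun a _ => helper1 r (r - a) (by omega)
  have step2 : ∑ a ∈ range r, (r - a) * (r - a + 1)
      = ∑ a ∈ range r, (a + 1) * (a + 2) := by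
    rw [← Finset.sum_range_reflect (fun j => (j + 1) * (j + 2)) r]
    exact Finset.sum_congr rfl fun a ha => by
      have := Finset.mem_range.mp ha
      congr 1 <;> omega
  calc 6 * ∑ a ∈ range r, ∑ b ∈ range r, (r - a - b)
      = 3 * ∑ a ∈ range r, 2 * ∑ b ∈ range r, (r - a - b) := by
        rw [Finset.mul_sum, Finset.mul_sum]
        exact Finset.sum_congr rfl fun a _ => by ring
    _ = 3 * ∑ a ∈ range r, (a + 1) * (a + 2) := by rw [step1, step2]
    _ = r * (r + 1) * (r + 2) := helper2 r

/-- A Wilf partition: the multiplicities of distinct parts are all different. -/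
def IsWilf {n : ℕ} (P : n.Partition) : Prop :=
  ∀ p ∈ P.parts, ∀ q ∈ P.parts,
    Multiset.count p P.parts = Multiset.count q P.parts → p = q

theorem stmt2 (n : ℕ) (hn : 0 < n) (P : n.Partition) (hP : IsWilf P)
    (r : ℕ) (hr : P.parts.toFinset.card = r) :
    r ^ 3 ≤ 6 * n := by
  classical
  set S : Finset ℕ := P.parts.toFinset with hS
  set m : ℕ → ℕ := fun s => Multiset.count s P.parts with hm
  have hSmem : ∀ s ∈ S, s ∈ P.parts := fun s hs => Multiset.mem_toFinset.mp hs
  have hpos : ∀ s ∈ S, 0 < s := fun s hs => P.parts_pos (hSmem s hs)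
  have hmpos : ∀ s ∈ S, 0 < m s := fun s hs => Multiset.count_pos.mpr (hSmem s hs)
  -- sum formula
  have hsum : ∑ s ∈ S, s * m s = n := by
    have h := Finset.sum_multiset_map_count P.parts (fun x => x)
    simp only [Multiset.map_id', smul_eq_mul] at h
    rw [P.parts_sum] at h
    rw [h]
    exact Finset.sum_congr rfl fun s _ => by rw [mul_comm]
  -- key bound 2 : each (a,b) in range r × range r contributes
  have key2 : ∀ ab ∈ range r ×ˢ range r,
      r - ab.1 - ab.2 ≤ (S.filter (fun s => ab.1 < s ∧ ab.2 < m s)).card := by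
    rintro ⟨a, b⟩ -
    show r - a - b ≤ (S.filter (fun s => a < s ∧ b < m s)).card
    have hsplit : S ⊆ (S.filter (fun s => a < s ∧ b < m s)) ∪
        (S.filter (fun s => s ≤ a)) ∪ (S.filter (fun s => m s ≤ b)) := by
      intro s hs
      simp only [Finset.mem_union, Finset.mem_filter]
      by_cases h1 : s ≤ a
      · exact Or.inl (Or.inr ⟨hs, h1⟩)
      · by_cases h2 : m s ≤ b
        · exact Or.inr ⟨hs, h2⟩
        · exact Or.inl (Or.inl ⟨hs, by omega, by omega⟩)
    have hc1 : (S.filter (fun s => s ≤ a)).card ≤ a := by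
      have hsub : S.filter (fun s => s ≤ a) ⊆ Finset.Icc 1 a := by
        intro s hs
        simp only [Finset.mem_filter] at hs
        exact Finset.mem_Icc.mpr ⟨hpos s hs.1, hs.2⟩
      simpa using Finset.card_le_card hsub
    have hc2 : (S.filter (fun s => m s ≤ b)).card ≤ b := by
      have : ((S.filter (fun s => m s ≤ b)).image m).card
          = (S.filter (fun s => m s ≤ b)).card := by
        apply Finset.card_image_of_injOn
        intro p hp q hq hpq
        simp only [Finset.mem_coe, Finset.mem_filter] at hp hq
        exact hP p (hSmem p hp.1) q (hSmem q hq.1) hpq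
      rw [← this]
      have hsub : (S.filter (fun s => m s ≤ b)).image m ⊆ Finset.Icc 1 b := by
        intro v hv
        simp only [Finset.mem_image] at hv
        obtain ⟨s, hs, rfl⟩ := hv
        simp only [Finset.mem_filter] at hs
        exact Finset.mem_Icc.mpr ⟨hmpos s hs.1, hs.2⟩
      simpa using Finset.card_le_card hsub
    have hcard : r ≤ (S.filter (fun s => a < s ∧ b < m s)).card + a + b := by
      calc r = S.card := hr.symm
        _ ≤ ((S.filter (fun s => a < s ∧ b < m s)) ∪
              (S.filter (fun s => s ≤ a)) ∪ (S.filter (fun s => m s ≤ b))).card :=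
            Finset.card_le_card hsplit
        _ ≤ ((S.filter (fun s => a < s ∧ b < m s)) ∪
              (S.filter (fun s => s ≤ a))).card + (S.filter (fun s => m s ≤ b)).card :=
            Finset.card_union_le _ _
        _ ≤ (S.filter (fun s => a < s ∧ b < m s)).card + (S.filter (fun s => s ≤ a)).card
              + (S.filter (fun s => m s ≤ b)).card := by
            have := Finset.card_union_le (S.filter (fun s => a < s ∧ b < m s))
              (S.filter (fun s => s ≤ a))
            omega
        _ ≤ (S.filter (fun s => a < s ∧ b < m s)).card + a + b := by omega
    omega
  -- main chain
  have chain : ∑ ab ∈ range r ×ˢ range r, (r - ab.1 - ab.2) ≤ n := by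
    calc ∑ ab ∈ range r ×ˢ range r, (r - ab.1 - ab.2)
        ≤ ∑ ab ∈ range r ×ˢ range r,
            (S.filter (fun s => ab.1 < s ∧ ab.2 < m s)).card :=
          Finset.sum_le_sum key2
      _ = ∑ ab ∈ range r ×ˢ range r, ∑ s ∈ S,
            (if ab.1 < s ∧ ab.2 < m s then 1 else 0) := by
          exact Finset.sum_congr rfl fun ab _ => Finset.card_filter _ _
      _ = ∑ s ∈ S, ∑ ab ∈ range r ×ˢ range r,
            (if ab.1 < s ∧ ab.2 < m s then 1 else 0) := Finset.sum_comm
      _ = ∑ s ∈ S,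
            ((range r ×ˢ range r).filter (fun ab => ab.1 < s ∧ ab.2 < m s)).card := by
          exact Finset.sum_congr rfl fun s _ => (Finset.card_filter _ _).symm
      _ ≤ ∑ s ∈ S, s * m s := by
          apply Finset.sum_le_sum
          intro s _
          have hsub : (range r ×ˢ range r).filter (fun ab => ab.1 < s ∧ ab.2 < m s)
              ⊆ range s ×ˢ range (m s) := by
            rintro ⟨a, b⟩ hab
            simp only [Finset.mem_filter, Finset.mem_product, Finset.mem_range] at hab ⊢
            exact ⟨hab.2.1, hab.2.2⟩
          calc ((range r ×ˢ range r).filter (fun ab => ab.1 < s ∧ ab.2 < m s)).card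
              ≤ (range s ×ˢ range (m s)).card := Finset.card_le_card hsub
            _ = s * m s := by simp [Finset.card_product]
      _ = n := hsum
  have h6 := helper3 r
  nlinarith [chain, h6, sq_nonneg r]
end

section
/- If a positive integer n admits a Wilf partition with exactly r distinct parts, then n ≥ r³/6 + r²/2 + r/3, i.e., 6n ≥ r³ + 3r² + 2r. -/
/-- Sum of distinct positive naturals is at least r(r+1)/2. -/
lemma sum_distinct_pos_lb : ∀ k (S : Finset ℕ), S.card ≤ k → 0 ∉ S →
    S.card * (S.card + 1) ≤ 2 * ∑ p ∈ S, p := by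
  intro k
  induction k with
  | zero =>
    intro S hS _
    have : S = ∅ := Finset.card_eq_zero.1 (Nat.le_zero.1 hS)
    subst this; simp
  | succ k ih =>
    intro S hS h0
    rcases S.eq_empty_or_nonempty with rfl | hne
    · simp
    · set M := S.max' hne with hM
      have hMS : M ∈ S := S.max'_mem hne
      have hsub : S ⊆ Finset.Icc 1 M := by
        intro x hx
        refine Finset.mem_Icc.2 ⟨?_, S.le_max' x hx⟩
        rcases Nat.eq_zero_or_pos x with rfl | h; exact absurd hx h0; exact h
      have hcard : S.card ≤ M := by
        simpa using Finset.card_le_card hsub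
      have hsum : ∑ p ∈ S, p = M + ∑ p ∈ S.erase M, p :=
        (Finset.add_sum_erase S id hMS).symm
      have hce : (S.erase M).card = S.card - 1 := Finset.card_erase_of_mem hMS
      have h1 : 1 ≤ S.card := Finset.card_pos.2 hne
      have ihe := ih (S.erase M) (by omega) (fun h => h0 (Finset.mem_of_mem_erase h))
      rw [hce] at ihe
      obtain ⟨t, htr⟩ : ∃ t, S.card = t + 1 := ⟨S.card - 1, by omega⟩
      rw [htr] at ihe ⊢
      simp only [Nat.add_sub_cancel] at ihe
      have hid : (t+1) * ((t+1) + 1) = t * (t + 1) + 2 * (t+1) := by ring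
      rw [htr] at hcard
      linarith [hsum, ihe, hcard, hid]

/-- Key combinatorial lemma. -/
lemma wilf_key : ∀ N (S : Finset ℕ) (m : ℕ → ℕ), (∑ p ∈ S, m p) ≤ N → 0 ∉ S →
    (∀ p ∈ S, 1 ≤ m p) → (∀ p ∈ S, ∀ q ∈ S, m p = m q → p = q) →
    S.card ^ 3 + 3 * S.card ^ 2 + 2 * S.card ≤ 6 * ∑ p ∈ S, p * m p := by
  intro N
  induction N with
  | zero =>
    intro S m hN h0 hm _
    rcases S.eq_empty_or_nonempty with rfl | ⟨a, ha⟩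
    · simp
    · exfalso
      have : 1 ≤ ∑ p ∈ S, m p := le_trans (hm a ha) (Finset.single_le_sum (fun p _ => Nat.zero_le _) ha)
      omega
  | succ N ih =>
    intro S m hN h0 hm hinj
    rcases S.eq_empty_or_nonempty with rfl | hne
    · simp
    · set S' := S.filter (fun p => 2 ≤ m p) with hS'
      set m' := fun p => m p - 1 with hm'
      -- sum of (m p - 1) over S
      have hsplit : ∑ p ∈ S, (m p - 1) + S.card = ∑ p ∈ S, m p := by
        rw [Finset.card_eq_sum_ones, ← Finset.sum_add_distrib]
        exact Finset.sum_congr rfl fun p hp => Nat.sub_add_cancel (hm p hp)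
      -- filter equalities
      have hfe1 : ∑ p ∈ S', (m p - 1) = ∑ p ∈ S, (m p - 1) := by
        rw [hS']
        exact Finset.sum_filter_of_ne (fun p hp h => by
          have := hm p hp; omega)
      have hfe2 : ∑ p ∈ S', p * (m p - 1) = ∑ p ∈ S, p * (m p - 1) := by
        rw [hS']
        refine Finset.sum_filter_of_ne (fun p hp h => ?_)
        have := hm p hp
        rcases Nat.lt_or_ge (m p) 2 with h2 | h2
        · exfalso; apply h; interval_cases (m p); simp_all
        · exact h2
      -- main sum decomposition
      have hdecomp : ∑ p ∈ S, p * m p = ∑ p ∈ S, p + ∑ p ∈ S', p * m' p := by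
        rw [hm']
        simp only []
        rw [hfe2, ← Finset.sum_add_distrib]
        exact Finset.sum_congr rfl fun p hp => by
          have := hm p hp
          have : m p - 1 + 1 = m p := Nat.sub_add_cancel (hm p hp)
          nlinarith [this]
      -- card bound : S.card ≤ S'.card + 1
      have hcard : S.card ≤ S'.card + 1 := by
        have hsplitc : S.card = S'.card + (S.filter (fun p => ¬ 2 ≤ m p)).card := by
          rw [hS']; exact (Finset.card_filter_add_card_filter_not _).symm
        have hone : (S.filter (fun p => ¬ 2 ≤ m p)).card ≤ 1 := by
          refine Finset.card_le_one.2 fun a ha b hb => ?_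
          simp only [Finset.mem_filter] at ha hb
          have ha1 : m a = 1 := by have := hm a ha.1; omega
          have hb1 : m b = 1 := by have := hm b hb.1; omega
          exact hinj a ha.1 b hb.1 (ha1.trans hb1.symm)
        omega
      -- apply IH to S'
      have hsub : S' ⊆ S := Finset.filter_subset _ _
      have h1 : 1 ≤ S.card := Finset.card_pos.2 hne
      have hNle : ∑ p ∈ S', m' p ≤ N := by
        have : ∑ p ∈ S', m' p = ∑ p ∈ S, (m p - 1) := hfe1
        omega
      have ihres := ih S' m' hNle (fun h => h0 (hsub h))
        (fun p hp => by
          have := (Finset.mem_filter.1 hp).2; simp only [hm']; omega)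
        (fun p hp q hq h => by
          have hp2 := (Finset.mem_filter.1 hp).2
          have hq2 := (Finset.mem_filter.1 hq).2
          refine hinj p (hsub hp) q (hsub hq) ?_
          simp only [hm'] at h; omega)
      -- sum of parts bound
      have hsum := sum_distinct_pos_lb S.card S le_rfl h0
      -- finish
      rw [hdecomp]
      have h6 : 3 * (S.card * (S.card + 1)) ≤ 6 * ∑ p ∈ S, p := by
        have := Nat.mul_le_mul_left 3 hsum
        linarith
      obtain ⟨s, hsr⟩ : ∃ s, S.card = s + 1 := ⟨S.card - 1, by omega⟩
      have hs' : s ≤ S'.card := by omega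
      have hmono : s ^ 3 + 3 * s ^ 2 + 2 * s ≤ S'.card ^ 3 + 3 * S'.card ^ 2 + 2 * S'.card := by
        gcongr
      rw [hsr] at h6 ⊢
      have hid : (s+1) ^ 3 + 3 * (s+1) ^ 2 + 2 * (s+1)
          = 3 * ((s+1) * ((s+1) + 1)) + (s ^ 3 + 3 * s ^ 2 + 2 * s) := by ring
      linarith [ihres, h6, hmono, hid]

theorem stmt3 (n : ℕ) (hn : 0 < n) (P : n.Partition) (hP : IsWilf P)
    (r : ℕ) (hr : P.parts.toFinset.card = r) :
    r ^ 3 + 3 * r ^ 2 + 2 * r ≤ 6 * n := by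
  have hsum : ∑ p ∈ P.parts.toFinset, p * P.parts.count p = n := by
    have h := Finset.sum_multiset_map_count P.parts (id : ℕ → ℕ)
    simp only [Multiset.map_id', smul_eq_mul, id] at h
    rw [P.parts_sum] at h
    exact (Finset.sum_congr rfl fun p _ => mul_comm _ _).trans h.symm
  have h0 : 0 ∉ P.parts.toFinset := by
    simp only [Multiset.mem_toFinset]
    intro h
    exact absurd (P.parts_pos h) (lt_irrefl 0)
  have hkey := wilf_key (∑ p ∈ P.parts.toFinset, P.parts.count p) P.parts.toFinset
    (fun p => P.parts.count p) le_rfl h0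
    (fun p hp => Multiset.one_le_count_iff_mem.2 (Multiset.mem_toFinset.1 hp))
    (fun p hp q hq h => hP p (Multiset.mem_toFinset.1 hp) q (Multiset.mem_toFinset.1 hq) h)
  rw [hr, hsum] at hkey
  exact hkey
end

section
/- The limit inferior, as n → ∞, of (ln f(n)) / (n^{1/3}·ln n) is at least 6^{1/3}/3; equivalently, ln f(n) ≥ (1 + o(1))·(6^{1/3}/3)·n^{1/3}·ln n as n → ∞. -/
open Filter Real

/-- `wilfCount n` is the number of Wilf partitions of `n`. -/
noncomputable def wilfCount (n : ℕ) : ℕ :=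
  Nat.card {P : n.Partition // IsWilf P}

namespace WilfAux


lemma gauss (T : ℕ) : 2 * ∑ t ∈ Finset.range T, (t+1) = T*(T+1) := by
  induction T with
  | zero => simp
  | succ T ih =>
    rw [Finset.sum_range_succ, Nat.mul_add, ih]; ring

lemma cubic (T : ℕ) : 6 * ∑ t ∈ Finset.range T, (t+1)*(T-t) = T*(T+1)*(T+2) := by
  induction T with
  | zero => simp
  | succ T ih =>
    have h1 : ∀ t ∈ Finset.range T, (t+1)*(T+1-t) = (t+1)*(T-t) + (t+1) := by
      intro t ht
      rw [Finset.mem_range] at ht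
      have : T + 1 - t = (T - t) + 1 := by omega
      rw [this]; ring
    rw [Finset.sum_range_succ, Finset.sum_congr rfl h1, Finset.sum_add_distrib]
    have h2 : T + 1 - T = 1 := by omega
    rw [h2]
    have hg := gauss T
    have h3 : 6 * ((∑ t ∈ Finset.range T, (t+1)*(T-t)) + (∑ t ∈ Finset.range T, (t+1))
        + (T+1)*1)
        = 6 * (∑ t ∈ Finset.range T, (t+1)*(T-t)) + 3 * (2 * ∑ t ∈ Finset.range T, (t+1))
          + 6*(T+1) := by ring
    rw [h3, ih, hg]; ring

section construction

variable {T b : ℕ}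

def pos (x : Fin T × Fin b) : ℕ := (x.2 : ℕ) + b * (x.1 : ℕ) + 2

def val (σ : Fin T → Equiv.Perm (Fin b)) (x : Fin T × Fin b) : ℕ :=
  (σ x.1 x.2 : ℕ) + b * (T - 1 - (x.1 : ℕ)) + 1

lemma key {b u v u' v' : ℕ} (hv : v < b) (hv' : v' < b) (h : v + b*u = v' + b*u') :
    v = v' ∧ u = u' := by
  have hb : 0 < b := lt_of_le_of_lt (Nat.zero_le _) hv
  have h1 : (v + b*u) / b = (v' + b*u') / b := by rw [h]
  rw [Nat.add_mul_div_left _ _ hb, Nat.add_mul_div_left _ _ hb,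
    Nat.div_eq_of_lt hv, Nat.div_eq_of_lt hv'] at h1
  have h2 : u = u' := by omega
  subst h2
  exact ⟨by omega, rfl⟩

lemma pos_inj : Function.Injective (pos (T := T) (b := b)) := by
  rintro ⟨x1, x2⟩ ⟨y1, y2⟩ h
  unfold pos at h
  simp only at h
  have h' : (x2 : ℕ) + b * x1 = (y2 : ℕ) + b * y1 := by omega
  obtain ⟨h1, h2⟩ := key x2.isLt y2.isLt h'
  rw [Prod.mk.injEq]
  exact ⟨Fin.ext h2, Fin.ext h1⟩

lemma val_inj (σ : Fin T → Equiv.Perm (Fin b)) : Function.Injective (val σ) := by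
  rintro ⟨x1, x2⟩ ⟨y1, y2⟩ h
  unfold val at h
  simp only at h
  have h' : ((σ x1 x2 : Fin b) : ℕ) + b * (T - 1 - (x1:ℕ))
      = ((σ y1 y2 : Fin b) : ℕ) + b * (T - 1 - (y1:ℕ)) := by omega
  obtain ⟨h1, h2⟩ := key (σ x1 x2).isLt (σ y1 y2).isLt h'
  have ht : (x1 : ℕ) = (y1 : ℕ) := by
    have := x1.isLt; have := y1.isLt; omega
  have ht' : x1 = y1 := Fin.ext ht
  subst ht'
  have h4 : σ x1 x2 = σ x1 y2 := Fin.ext h1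
  have h5 := (σ x1).injective h4
  rw [Prod.mk.injEq]
  exact ⟨rfl, h5⟩

lemma val_le (σ : Fin T → Equiv.Perm (Fin b)) (x : Fin T × Fin b) :
    val σ x ≤ T * b := by
  obtain ⟨t, r⟩ := x
  unfold val
  simp only
  have h1 : ((σ t r : Fin b) : ℕ) < b := (σ t r).isLt
  have h2 : (t:ℕ) < T := t.isLt
  have h3 : b * (T - 1 - (t:ℕ)) + b ≤ b * T := by
    have h4 : (T - 1 - (t:ℕ)) + 1 ≤ T := by omega
    calc b * (T - 1 - (t:ℕ)) + b = b * ((T-1-(t:ℕ)) + 1) := by ring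
    _ ≤ b * T := Nat.mul_le_mul_left _ h4
  have h5 : b * T = T * b := Nat.mul_comm b T
  omega

lemma val_pos (σ : Fin T → Equiv.Perm (Fin b)) (x : Fin T × Fin b) : 0 < val σ x := by
  unfold val; omega

lemma pos_two_le (x : Fin T × Fin b) : 2 ≤ pos x := by unfold pos; omega

def Sval (σ : Fin T → Equiv.Perm (Fin b)) : ℕ := ∑ x : Fin T × Fin b, pos x * val σ x

lemma Sval_le (σ : Fin T → Equiv.Perm (Fin b)) :
    6 * Sval σ ≤ T*b*(T*b+b)*(T*b+2*b) + 6*(T*b)*(T*b+b) := by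
  have hterm : ∀ x : Fin T × Fin b, pos x * val σ x ≤ (b*((x.1:ℕ)+1)+2) * (b*(T-(x.1:ℕ))) := by
    intro x
    have h1 : pos x ≤ b*((x.1:ℕ)+1)+2 := by
      unfold pos
      have hr := x.2.isLt
      have he : b*((x.1:ℕ)+1) = b*(x.1:ℕ) + b := by ring
      omega
    have h2 : val σ x ≤ b*(T-(x.1:ℕ)) := by
      unfold val
      have hσ := (σ x.1 x.2).isLt
      have hx := x.1.isLt
      have he : b * ((T - 1 - (x.1:ℕ)) + 1) = b*(T-(x.1:ℕ)) := by
        have : (T - 1 - (x.1:ℕ)) + 1 = T - (x.1:ℕ) := by omega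
        rw [this]
      have he2 : b * ((T - 1 - (x.1:ℕ)) + 1) = b * (T - 1 - (x.1:ℕ)) + b := by ring
      omega
    exact Nat.mul_le_mul h1 h2
  have hsum : Sval σ ≤ ∑ x : Fin T × Fin b, (b*((x.1:ℕ)+1)+2) * (b*(T-(x.1:ℕ))) :=
    Finset.sum_le_sum (fun x _ => hterm x)
  have hprod : ∑ x : Fin T × Fin b, (b*((x.1:ℕ)+1)+2) * (b*(T-(x.1:ℕ)))
      = ∑ t ∈ Finset.range T, b * ((b*(t+1)+2) * (b*(T-t))) := by
    rw [Fintype.sum_prod_type]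
    rw [← Fin.sum_univ_eq_sum_range (fun t => b * ((b*(t+1)+2) * (b*(T-t)))) T]
    refine Finset.sum_congr rfl (fun t _ => ?_)
    dsimp only
    rw [Finset.sum_const, Finset.card_univ, Fintype.card_fin, smul_eq_mul, Nat.mul_comm]
  have hrefl : ∑ t ∈ Finset.range T, (T-t) = ∑ t ∈ Finset.range T, (t+1) := by
    rw [← Finset.sum_range_reflect (fun j => j + 1) T]
    exact Finset.sum_congr rfl (fun t ht => by
      rw [Finset.mem_range] at ht; omega)
  have step1 : 6 * ∑ t ∈ Finset.range T, b * ((b*(t+1)+2) * (b*(T-t)))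
      = (b*b*b*6)*(∑ t ∈ Finset.range T, (t+1)*(T-t))
        + (b*b*12)*(∑ t ∈ Finset.range T, (T-t)) := by
    rw [Finset.mul_sum]
    rw [Finset.sum_congr rfl (fun t _ => by ring :
      ∀ t ∈ Finset.range T, 6 * (b * ((b*(t+1)+2) * (b*(T-t))))
        = (b*b*b*6)*((t+1)*(T-t)) + (b*b*12)*(T-t))]
    rw [Finset.sum_add_distrib, ← Finset.mul_sum, ← Finset.mul_sum]
  have hcubic := cubic T
  have hgauss := gauss T
  calc 6 * Sval σ ≤ 6 * ∑ t ∈ Finset.range T, b * ((b*(t+1)+2) * (b*(T-t))) := by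
        rw [hprod] at hsum; omega
  _ = (b*b*b*6)*(∑ t ∈ Finset.range T, (t+1)*(T-t))
        + (b*b*12)*(∑ t ∈ Finset.range T, (t+1)) := by rw [step1, hrefl]
  _ = b*b*b*(6 * ∑ t ∈ Finset.range T, (t+1)*(T-t))
        + b*b*6*(2 * ∑ t ∈ Finset.range T, (t+1)) := by ring
  _ = b*b*b*(T*(T+1)*(T+2)) + b*b*6*(T*(T+1)) := by rw [hcubic, hgauss]
  _ = T*b*(T*b+b)*(T*b+2*b) + 6*(T*b)*(T*b+b) := by ring

end construction


section partitionC

variable {T b : ℕ}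

def wilfParts (n : ℕ) (σ : Fin T → Equiv.Perm (Fin b)) : Multiset ℕ :=
  Multiset.replicate 1 (n - Sval σ) + ∑ x : Fin T × Fin b, Multiset.replicate (pos x) (val σ x)

lemma count_wilfParts (n : ℕ) (σ : Fin T → Equiv.Perm (Fin b)) (a : ℕ) :
    Multiset.count a (wilfParts n σ)
      = (if n - Sval σ = a then 1 else 0)
        + ∑ x : Fin T × Fin b, (if val σ x = a then pos x else 0) := by
  unfold wilfParts
  rw [Multiset.count_add, Multiset.count_replicate, Multiset.count_sum']
  congr 1
  exact Finset.sum_congr rfl fun x _ => Multiset.count_replicate _ _ _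

lemma slack_ge {n : ℕ} {σ : Fin T → Equiv.Perm (Fin b)} (H : Sval σ + (T*b+2) ≤ n) :
    T*b + 2 ≤ n - Sval σ := by omega

lemma count_val (n : ℕ) (σ : Fin T → Equiv.Perm (Fin b))
    (H : Sval σ + (T*b+2) ≤ n) (x₀ : Fin T × Fin b) :
    Multiset.count (val σ x₀) (wilfParts n σ) = pos x₀ := by
  rw [count_wilfParts]
  have h1 : n - Sval σ ≠ val σ x₀ := by
    have := slack_ge H; have := val_le σ x₀; omega
  rw [if_neg h1]
  rw [Finset.sum_eq_single_of_mem x₀ (Finset.mem_univ _)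
    (fun x _ hx => if_neg (fun hval => hx (val_inj σ hval)))]
  rw [if_pos rfl]
  omega

lemma count_slack (n : ℕ) (σ : Fin T → Equiv.Perm (Fin b))
    (H : Sval σ + (T*b+2) ≤ n) :
    Multiset.count (n - Sval σ) (wilfParts n σ) = 1 := by
  rw [count_wilfParts, if_pos rfl]
  rw [Finset.sum_eq_zero (fun x _ => if_neg (by
    have := slack_ge H; have := val_le σ x; omega))]
  omega

lemma mem_wilfParts {n : ℕ} {σ : Fin T → Equiv.Perm (Fin b)} {a : ℕ} :
    a ∈ wilfParts n σ ↔ a = n - Sval σ ∨ ∃ x, val σ x = a := by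
  unfold wilfParts
  rw [Multiset.mem_add, Multiset.mem_replicate, Multiset.mem_sum]
  constructor
  · rintro (⟨-, h⟩ | ⟨x, -, hx⟩)
    · exact Or.inl h
    · exact Or.inr ⟨x, (Multiset.eq_of_mem_replicate hx).symm⟩
  · rintro (h | ⟨x, hx⟩)
    · exact Or.inl ⟨one_ne_zero, h⟩
    · refine Or.inr ⟨x, Finset.mem_univ _, ?_⟩
      rw [← hx]
      exact Multiset.mem_replicate.2 ⟨by have := pos_two_le x; omega, rfl⟩

lemma sum_wilfParts {n : ℕ} {σ : Fin T → Equiv.Perm (Fin b)}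
    (H : Sval σ + (T*b+2) ≤ n) : (wilfParts n σ).sum = n := by
  unfold wilfParts
  rw [Multiset.sum_add, Multiset.sum_replicate]
  have h2 : (∑ x : Fin T × Fin b, Multiset.replicate (pos x) (val σ x)).sum
      = ∑ x : Fin T × Fin b, (Multiset.replicate (pos x) (val σ x)).sum :=
    map_sum Multiset.sumAddMonoidHom _ _
  rw [h2]
  have h3 : ∀ x : Fin T × Fin b, (Multiset.replicate (pos x) (val σ x)).sum
      = pos x * val σ x := fun x => by rw [Multiset.sum_replicate, smul_eq_mul]
  rw [Finset.sum_congr rfl (fun x _ => h3 x)]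
  have : ∑ x : Fin T × Fin b, pos x * val σ x = Sval σ := rfl
  rw [this, smul_eq_mul]
  omega

def wilfPartition (n : ℕ) (σ : Fin T → Equiv.Perm (Fin b))
    (H : Sval σ + (T*b+2) ≤ n) : n.Partition where
  parts := wilfParts n σ
  parts_pos := by
    intro i hi
    rw [mem_wilfParts] at hi
    rcases hi with h | ⟨x, hx⟩
    · have := slack_ge H; omega
    · rw [← hx]; exact val_pos σ x
  parts_sum := sum_wilfParts H

lemma wilfPartition_isWilf (n : ℕ) (σ : Fin T → Equiv.Perm (Fin b))
    (H : Sval σ + (T*b+2) ≤ n) : IsWilf (wilfPartition n σ H) := by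
  intro p hp q hq hc
  have hp' : p ∈ wilfParts n σ := hp
  have hq' : q ∈ wilfParts n σ := hq
  rw [mem_wilfParts] at hp' hq'
  have hcount : Multiset.count p (wilfParts n σ) = Multiset.count q (wilfParts n σ) := hc
  rcases hp' with hp1 | ⟨x, hx⟩ <;> rcases hq' with hq1 | ⟨y, hy⟩
  · rw [hp1, hq1]
  · exfalso
    rw [hp1, count_slack n σ H, ← hy, count_val n σ H y] at hcount
    have := pos_two_le y; omega
  · exfalso
    rw [hq1, count_slack n σ H, ← hx, count_val n σ H x] at hcount
    have := pos_two_le x; omega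
  · rw [← hx, ← hy] at hcount ⊢
    rw [count_val n σ H x, count_val n σ H y] at hcount
    rw [pos_inj hcount]

lemma factorial_pow_le_wilfCount (n T b : ℕ)
    (H : T*b*(T*b+b)*(T*b+2*b) + 6*(T*b)*(T*b+b) + 6*(T*b+2) ≤ 6*n) :
    Nat.factorial b ^ T ≤ wilfCount n := by
  have H' : ∀ σ : Fin T → Equiv.Perm (Fin b), Sval σ + (T*b+2) ≤ n := by
    intro σ
    have := Sval_le σ
    omega
  let F : (Fin T → Equiv.Perm (Fin b)) → {P : n.Partition // IsWilf P} :=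
    fun σ => ⟨wilfPartition n σ (H' σ), wilfPartition_isWilf n σ (H' σ)⟩
  have hF : Function.Injective F := by
    intro σ σ' h
    have hp : wilfParts n σ = wilfParts n σ' :=
      congrArg (fun z => (z : {P : n.Partition // IsWilf P}).1.parts) h
    have hval : ∀ x, val σ x = val σ' x := by
      intro x
      have hc1 : Multiset.count (val σ' x) (wilfParts n σ') = pos x := count_val n σ' (H' σ') x
      rw [← hp] at hc1
      by_cases hex : ∃ y, val σ y = val σ' x
      · obtain ⟨y, hy⟩ := hex
        have hc2 : Multiset.count (val σ' x) (wilfParts n σ) = pos y := by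
          rw [← hy]; exact count_val n σ (H' σ) y
        have hxy : y = x := pos_inj (by rw [← hc1, hc2])
        subst hxy
        exact hy
      · exfalso
        rw [count_wilfParts] at hc1
        rw [Finset.sum_eq_zero (fun y _ => if_neg (fun h => hex ⟨y, h⟩))] at hc1
        have := pos_two_le x
        split at hc1 <;> omega
    funext t
    apply Equiv.ext
    intro r
    have hv := hval (t, r)
    unfold val at hv
    simp only at hv
    exact Fin.ext (by omega)
  calc Nat.factorial b ^ T
      = Nat.card (Fin T → Equiv.Perm (Fin b)) := by
        simp [Nat.card_eq_fintype_card, Fintype.card_fun, Fintype.card_perm]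
  _ ≤ Nat.card {P : n.Partition // IsWilf P} := Nat.card_le_card_of_injective F hF
  _ = wilfCount n := rfl

end partitionC


lemma card_le_sum (s : Multiset ℕ) (h : ∀ x ∈ s, 1 ≤ x) : Multiset.card s ≤ s.sum := by
  induction s using Multiset.induction_on with
  | empty => simp
  | cons a s ih =>
    rw [Multiset.card_cons, Multiset.sum_cons]
    have h1 := h a (Multiset.mem_cons_self a s)
    have h2 := ih (fun x hx => h x (Multiset.mem_cons_of_mem hx))
    omega

lemma msum_eq (s : Multiset ℕ) : s.sum = ∑ a ∈ s.toFinset, Multiset.count a s * a := by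
  rw [Finset.sum_multiset_count s]
  exact Finset.sum_congr rfl fun a _ => by rw [smul_eq_mul]

lemma wilf_card_bound {n : ℕ} (t : ℕ) (P : n.Partition) (hW : IsWilf P) :
    P.parts.toFinset.card * (t*t) ≤ 2*(t*t*t) + n := by
  classical
  set A := P.parts.toFinset with hA
  set A1 := A.filter (fun p => t ≤ p ∧ t ≤ Multiset.count p P.parts) with hA1
  have h1 : (A.filter (fun p => p < t)).card ≤ t := by
    calc (A.filter (fun p => p < t)).card ≤ (Finset.range t).card :=
          Finset.card_le_card (fun p hp => Finset.mem_range.2 (Finset.mem_filter.1 hp).2)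
    _ = t := Finset.card_range t
  have h2 : (A.filter (fun p => Multiset.count p P.parts < t)).card ≤ t := by
    calc (A.filter (fun p => Multiset.count p P.parts < t)).card
        ≤ (Finset.range t).card := by
          refine Finset.card_le_card_of_injOn (fun p => Multiset.count p P.parts)
            (fun p hp => Finset.mem_range.2 (Finset.mem_filter.1 hp).2) ?_
          intro p hp q hq hc
          exact hW p (Multiset.mem_toFinset.1 (Finset.mem_filter.1 hp).1)
            q (Multiset.mem_toFinset.1 (Finset.mem_filter.1 hq).1) hc
    _ = t := Finset.card_range t
  have hsplit : A.card ≤ (A.filter (fun p => p < t)).card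
      + (A.filter (fun p => Multiset.count p P.parts < t)).card + A1.card := by
    have hsub : A ⊆ ((A.filter (fun p => p < t))
        ∪ (A.filter (fun p => Multiset.count p P.parts < t))) ∪ A1 := by
      intro p hp
      rw [Finset.mem_union, Finset.mem_union, Finset.mem_filter, Finset.mem_filter,
        Finset.mem_filter]
      by_cases hc1 : p < t
      · exact Or.inl (Or.inl ⟨hp, hc1⟩)
      by_cases hc2 : Multiset.count p P.parts < t
      · exact Or.inl (Or.inr ⟨hp, hc2⟩)
      · exact Or.inr ⟨hp, by omega, by omega⟩
    calc A.card ≤ _ := Finset.card_le_card hsub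
    _ ≤ ((A.filter (fun p => p < t)) ∪ (A.filter (fun p => Multiset.count p P.parts < t))).card
          + A1.card := Finset.card_union_le _ _
    _ ≤ (A.filter (fun p => p < t)).card
          + (A.filter (fun p => Multiset.count p P.parts < t)).card + A1.card := by
        have := Finset.card_union_le (A.filter (fun p => p < t))
          (A.filter (fun p => Multiset.count p P.parts < t))
        omega
  have hsum : A1.card * (t*t) ≤ n := by
    have hle : ∑ p ∈ A1, Multiset.count p P.parts * p ≤ ∑ p ∈ A, Multiset.count p P.parts * p :=
      Finset.sum_le_sum_of_subset (Finset.filter_subset _ _)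
    have hn : ∑ p ∈ A, Multiset.count p P.parts * p = n := by
      rw [← msum_eq]; exact P.parts_sum
    have hterm : ∀ p ∈ A1, t*t ≤ Multiset.count p P.parts * p := by
      intro p hp
      obtain ⟨-, h3, h4⟩ := Finset.mem_filter.1 hp
      exact Nat.mul_le_mul h4 h3
    calc A1.card * (t*t) = ∑ _p ∈ A1, t*t := by rw [Finset.sum_const, smul_eq_mul]
    _ ≤ ∑ p ∈ A1, Multiset.count p P.parts * p := Finset.sum_le_sum hterm
    _ ≤ n := by omega
  calc A.card * (t*t) ≤ (t + t + A1.card) * (t*t) := Nat.mul_le_mul_right _ (by omega)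
  _ = 2*(t*t*t) + A1.card * (t*t) := by ring
  _ ≤ 2*(t*t*t) + n := by omega

lemma wilfCount_le (n K : ℕ)
    (hK : ∀ P : n.Partition, IsWilf P → P.parts.toFinset.card ≤ K) :
    wilfCount n ≤ (K+1) * ((n+1)*(n+1))^K := by
  classical
  set S : Finset (ℕ × ℕ) := Finset.range (n+1) ×ˢ Finset.range (n+1) with hS
  set Good : Finset (Finset (ℕ × ℕ)) := S.powerset.filter (fun A => A.card ≤ K) with hGood
  have hmem : ∀ (P : n.Partition), IsWilf P →
      P.parts.toFinset.image (fun p => (p, Multiset.count p P.parts)) ∈ Good := by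
    intro P hP
    rw [hGood, Finset.mem_filter, Finset.mem_powerset]
    constructor
    · intro z hz
      obtain ⟨p, hp, rfl⟩ := Finset.mem_image.1 hz
      have hpm := Multiset.mem_toFinset.1 hp
      have hple : p ≤ n := by
        have h1 := Multiset.single_le_sum (fun x _ => Nat.zero_le x) p hpm
        rw [P.parts_sum] at h1; omega
      have hcle : Multiset.count p P.parts ≤ n := by
        have h1 := Multiset.count_le_card p P.parts
        have h2 := card_le_sum P.parts (fun x hx => P.parts_pos hx)
        rw [P.parts_sum] at h2; omega
      rw [hS, Finset.mem_product, Finset.mem_range, Finset.mem_range]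
      exact ⟨by omega, by omega⟩
    · calc (P.parts.toFinset.image (fun p => (p, Multiset.count p P.parts))).card
          ≤ P.parts.toFinset.card := Finset.card_image_le
      _ ≤ K := hK P hP
  let F : {P : n.Partition // IsWilf P} → {A // A ∈ Good} := fun z =>
    ⟨z.1.parts.toFinset.image (fun p => (p, Multiset.count p z.1.parts)), hmem z.1 z.2⟩
  have hkey : ∀ (P Q : n.Partition),
      P.parts.toFinset.image (fun p => (p, Multiset.count p P.parts))
        = Q.parts.toFinset.image (fun p => (p, Multiset.count p Q.parts)) →
      ∀ a v, 0 < v → Multiset.count a P.parts = v → Multiset.count a Q.parts = v := by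
    intro P Q himg a v hv hav
    have ha : a ∈ P.parts.toFinset := by
      rw [Multiset.mem_toFinset]
      rw [← Multiset.count_pos, hav]; exact hv
    have : (a, v) ∈ Q.parts.toFinset.image (fun p => (p, Multiset.count p Q.parts)) := by
      rw [← himg]
      exact Finset.mem_image.2 ⟨a, ha, by rw [hav]⟩
    obtain ⟨q, hq, heq⟩ := Finset.mem_image.1 this
    have h1 : q = a := congrArg Prod.fst heq
    have h2 : Multiset.count q Q.parts = v := congrArg Prod.snd heq
    rw [← h1]; exact h2
  have hF : Function.Injective F := by
    rintro ⟨P, hP⟩ ⟨Q, hQ⟩ h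
    have himg : P.parts.toFinset.image (fun p => (p, Multiset.count p P.parts))
        = Q.parts.toFinset.image (fun p => (p, Multiset.count p Q.parts)) :=
      congrArg Subtype.val h
    have hPQ : P.parts = Q.parts := by
      ext a
      rcases Nat.eq_zero_or_pos (Multiset.count a P.parts) with h0 | hpos
      · rcases Nat.eq_zero_or_pos (Multiset.count a Q.parts) with h0' | hpos'
        · rw [h0, h0']
        · have := hkey Q P himg.symm a _ hpos' rfl
          omega
      · have := hkey P Q himg a _ hpos rfl
        omega
    exact Subtype.ext (Nat.Partition.ext hPQ)
  calc wilfCount n ≤ Nat.card {A // A ∈ Good} := Nat.card_le_card_of_injective F hF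
  _ = Good.card := by rw [Nat.card_eq_fintype_card, Fintype.card_coe]
  _ ≤ (K+1) * ((n+1)*(n+1))^K := by
    have hsub : Good ⊆ (Finset.range (K+1)).biUnion (fun j => S.powersetCard j) := by
      intro A hA
      rw [hGood, Finset.mem_filter, Finset.mem_powerset] at hA
      rw [Finset.mem_biUnion]
      exact ⟨A.card, Finset.mem_range.2 (by omega), Finset.mem_powersetCard.2 ⟨hA.1, rfl⟩⟩
    calc Good.card ≤ _ := Finset.card_le_card hsub
    _ ≤ ∑ j ∈ Finset.range (K+1), (S.powersetCard j).card := Finset.card_biUnion_le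
    _ ≤ ∑ _j ∈ Finset.range (K+1), ((n+1)*(n+1))^K := by
        refine Finset.sum_le_sum fun j hj => ?_
        rw [Finset.card_powersetCard]
        have hcard : S.card = (n+1)*(n+1) := by
          rw [hS, Finset.card_product, Finset.card_range]
        rw [hcard]
        calc Nat.choose ((n+1)*(n+1)) j ≤ ((n+1)*(n+1))^j := Nat.choose_le_pow _ _
        _ ≤ ((n+1)*(n+1))^K := Nat.pow_le_pow_right (by positivity) (by
            rw [Finset.mem_range] at hj; omega)
    _ = (K+1) * ((n+1)*(n+1))^K := by rw [Finset.sum_const, Finset.card_range, smul_eq_mul]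


lemma log_factorial (b : ℕ) : (b:ℝ) * Real.log b - b ≤ Real.log (Nat.factorial b) := by
  induction b with
  | zero => simp
  | succ b ih =>
    rw [Nat.factorial_succ]
    push_cast
    rw [Real.log_mul (by positivity)
      (by exact_mod_cast Nat.cast_ne_zero.2 (Nat.factorial_ne_zero b))]
    have hstep : ((b:ℝ)+1) * Real.log ((b:ℝ)+1) - ((b:ℝ)+1)
        ≤ Real.log ((b:ℝ)+1) + ((b:ℝ) * Real.log b - b) := by
      rcases Nat.eq_zero_or_pos b with rfl | hb
      · simp
      · have hb' : (0:ℝ) < b := by exact_mod_cast hb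
        have h1 : Real.log (((b:ℝ)+1)/b) ≤ ((b:ℝ)+1)/b - 1 :=
          Real.log_le_sub_one_of_pos (by positivity)
        have h2 : Real.log (((b:ℝ)+1)/b) = Real.log ((b:ℝ)+1) - Real.log b :=
          Real.log_div (by positivity) (by positivity)
        have h3 : ((b:ℝ)+1)/b - 1 = 1/b := by field_simp; ring
        have h4 : (b:ℝ) * (Real.log ((b:ℝ)+1) - Real.log b) ≤ 1 := by
          rw [← h2]
          calc (b:ℝ) * Real.log (((b:ℝ)+1)/b) ≤ (b:ℝ) * (1/b) := by
                rw [h3] at h1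
                exact mul_le_mul_of_nonneg_left h1 (le_of_lt hb')
          _ = 1 := by field_simp
        nlinarith [h4]
    linarith [hstep, ih]

lemma tendsto_x : Tendsto (fun n : ℕ => (n:ℝ)^((1:ℝ)/3)) atTop atTop :=
  (tendsto_rpow_atTop (by norm_num)).comp tendsto_natCast_atTop_atTop

lemma tendsto_logn : Tendsto (fun n : ℕ => Real.log n) atTop atTop :=
  Real.tendsto_log_atTop.comp tendsto_natCast_atTop_atTop

lemma A_pow : ((6:ℝ)^((1:ℝ)/3))^(3:ℕ) = 6 := by
  rw [← Real.rpow_natCast ((6:ℝ)^((1:ℝ)/3)) 3, ← Real.rpow_mul (by norm_num)]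
  norm_num

lemma A_pos : (0:ℝ) < (6:ℝ)^((1:ℝ)/3) := Real.rpow_pos_of_pos (by norm_num) _

lemma A_ge_one : 1 ≤ (6:ℝ)^((1:ℝ)/3) := by
  calc (1:ℝ) = (1:ℝ)^((1:ℝ)/3) := (Real.one_rpow _).symm
  _ ≤ (6:ℝ)^((1:ℝ)/3) := Real.rpow_le_rpow (by norm_num) (by norm_num) (by norm_num)

lemma A_le_two : (6:ℝ)^((1:ℝ)/3) ≤ 2 := by
  have h8 : ((8:ℝ))^((1:ℝ)/3) = 2 := by
    rw [show (8:ℝ) = (2:ℝ)^(3:ℕ) by norm_num, ← Real.rpow_natCast (2:ℝ) 3,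
      ← Real.rpow_mul (by norm_num)]
    norm_num
  calc (6:ℝ)^((1:ℝ)/3) ≤ (8:ℝ)^((1:ℝ)/3) :=
        Real.rpow_le_rpow (by norm_num) (by norm_num) (by norm_num)
  _ = 2 := h8

lemma xcube (n : ℕ) : ((n:ℝ)^((1:ℝ)/3))^(3:ℕ) = n := by
  rw [← Real.rpow_natCast ((n:ℝ)^((1:ℝ)/3)) 3, ← Real.rpow_mul (Nat.cast_nonneg n)]
  norm_num

lemma aux_mul2 {a t x : ℝ} (ha0 : 0 ≤ a) (ha : a ≤ 2) (ht0 : 0 ≤ t) (ht : t ≤ 1)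
    (hx : 0 ≤ x) : a*t*x ≤ 2*x := by
  have h1 : a*t ≤ 2 := by nlinarith
  calc a*t*x ≤ 2*x := mul_le_mul_of_nonneg_right h1 hx

lemma aux_sq {y x : ℝ} (hy0 : 0 ≤ y) (h : y ≤ 2*x) : y*y ≤ 4*(x*x) := by nlinarith

lemma aux_onele {x : ℝ} (h : 1 ≤ x) : 1 ≤ x*x := by nlinarith

lemma aux_48 {x M : ℝ} (hx0 : 0 < x) (hM0 : 0 < M) (h : 2*M ≤ x) :
    48*(x*x)*M ≤ 36*(x*x*x) := by nlinarith

lemma aux_xlexx {x : ℝ} (h : 1 ≤ x) : x ≤ x*x := by nlinarith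

lemma aux_cube_le {t u : ℝ} (ht0 : 0 ≤ t) (ht1 : t ≤ 1) (hu : 0 ≤ u) :
    t*t*t*u ≤ t*u := by
  have htt : t*t ≤ 1 := by nlinarith
  calc t*t*t*u = (t*t)*(t*u) := by ring
  _ ≤ 1*(t*u) := mul_le_mul_of_nonneg_right htt (mul_nonneg ht0 hu)
  _ = t*u := one_mul _

lemma div_mul_ge (k b : ℕ) (hb : 0 < b) : k + 1 - b ≤ k / b * b := by
  have h2 : b * (k / b) + k % b = k := Nat.div_add_mod _ _
  rw [Nat.mul_comm] at h2
  have h1 : k % b < b := Nat.mod_lt _ hb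
  generalize hQ : k / b * b = Q at h2 ⊢
  omega

set_option maxHeartbeats 1000000 in
lemma lower_event {c : ℝ} (hc0 : 0 ≤ c) (hc : c < (6:ℝ)^((1:ℝ)/3) / 3) :
    ∀ᶠ n : ℕ in atTop, c * ((n:ℝ)^((1:ℝ)/3) * Real.log n) ≤ Real.log (wilfCount n) := by
  obtain ⟨A, hA⟩ : ∃ A : ℝ, A = (6:ℝ)^((1:ℝ)/3) := ⟨_, rfl⟩
  have hA3 : A^(3:ℕ) = 6 := by rw [hA]; exact A_pow
  have hA1 : 1 ≤ A := by rw [hA]; exact A_ge_one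
  have hA2 : A ≤ 2 := by rw [hA]; exact A_le_two
  have hA0 : 0 < A := by linarith
  have hc3 : 3*c < A := by rw [hA]; linarith
  obtain ⟨m, hm⟩ := exists_nat_gt (max ((8*A+1)/(A - 3*c)) 48)
  obtain ⟨M, hM⟩ : ∃ M : ℝ, M = (m:ℝ) := ⟨_, rfl⟩
  rw [← hM] at hm
  have hM48 : 48 ≤ M := le_trans (le_max_right _ _) (le_of_lt hm)
  have hM0 : 0 < M := by linarith
  have hMg : (8*A+1)/(A - 3*c) < M := lt_of_le_of_lt (le_max_left _ _) hm
  have h8 : 8*A+1 < M*(A-3*c) := by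
    rw [div_lt_iff₀ (by linarith : (0:ℝ) < A - 3*c)] at hMg
    linarith
  obtain ⟨γ, hγ⟩ : ∃ γ : ℝ, γ = A - (8*A+1)/M := ⟨_, rfl⟩
  have hγc : 3*c < γ := by
    rw [hγ]
    have h9 : (8*A+1)/M < A - 3*c := by
      rw [div_lt_iff₀ hM0]
      linarith [h8, (mul_comm M (A-3*c) : M*(A-3*c) = (A-3*c)*M)]
    linarith
  have hγ0 : 0 < γ := by linarith
  have hγA : γ ≤ A := by
    rw [hγ]
    have : 0 ≤ (8*A+1)/M := by positivity
    linarith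
  obtain ⟨L, hL⟩ : ∃ L : ℝ, L = Real.log (2*M) + 1 := ⟨_, rfl⟩
  have hL1 : 1 ≤ L := by
    rw [hL]
    have : 0 ≤ Real.log (2*M) := Real.log_nonneg (by linarith)
    linarith
  have hd0 : 0 < γ/3 - c := by linarith
  obtain ⟨L0, hL0⟩ : ∃ L0 : ℝ, L0 = γ*L/(γ/3 - c) := ⟨_, rfl⟩
  filter_upwards [tendsto_x.eventually_ge_atTop (2*M+4),
    tendsto_logn.eventually_ge_atTop L0] with n hx hlog
  obtain ⟨x, hxdef⟩ : ∃ x : ℝ, x = (n:ℝ)^((1:ℝ)/3) := ⟨_, rfl⟩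
  rw [← hxdef] at hx ⊢
  have hx0 : (0:ℝ) < x := by linarith
  have hn1 : 1 ≤ n := by
    by_contra hn
    push_neg at hn
    interval_cases n
    · rw [hxdef] at hx0
      simp [Real.zero_rpow (by norm_num : (1:ℝ)/3 ≠ 0)] at hx0
  have hn0 : (0:ℝ) < n := by exact_mod_cast hn1
  have hx3 : x^(3:ℕ) = n := by rw [hxdef]; exact xcube n
  obtain ⟨b, hb⟩ : ∃ b : ℕ, b = ⌊x / M⌋₊ := ⟨_, rfl⟩
  obtain ⟨X, hX⟩ : ∃ X : ℝ, X = A*(1-8/M)*x := ⟨_, rfl⟩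
  obtain ⟨T, hT⟩ : ∃ T : ℕ, T = ⌊X⌋₊ / b := ⟨_, rfl⟩
  obtain ⟨N, hN⟩ : ∃ N : ℕ, N = T * b := ⟨_, rfl⟩
  have h18 : (0:ℝ) ≤ 1 - 8/M := by
    rw [sub_nonneg, div_le_one hM0]; linarith
  have hXnn : 0 ≤ X := by rw [hX]; positivity
  have hb1 : 1 ≤ b := by
    rw [hb]
    refine Nat.le_floor ?_
    rw [Nat.cast_one, le_div_iff₀ hM0]
    linarith
  have hbR : (1:ℝ) ≤ b := by exact_mod_cast hb1
  have hbx : (b:ℝ) ≤ x/M := by rw [hb]; exact Nat.floor_le (by positivity)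
  have hb0 : 0 < b := hb1
  have hNle : (N:ℝ) ≤ X := by
    have h1 : N ≤ ⌊X⌋₊ := by
      rw [hN, hT]; exact Nat.div_mul_le_self _ _
    calc (N:ℝ) ≤ (⌊X⌋₊:ℝ) := by exact_mod_cast h1
    _ ≤ X := Nat.floor_le hXnn
  have hNge : X - x/M ≤ (N:ℝ) := by
    have h3 : ⌊X⌋₊ + 1 - b ≤ N := by
      rw [hN, hT]; exact div_mul_ge _ _ hb0
    have h4 : X - 1 < (⌊X⌋₊:ℝ) := Nat.sub_one_lt_floor X
    have h5 : ((⌊X⌋₊ + 1 - b : ℕ):ℝ) ≤ (N:ℝ) := by exact_mod_cast h3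
    have h6 : (⌊X⌋₊:ℝ) + 1 - (b:ℝ) ≤ ((⌊X⌋₊ + 1 - b : ℕ):ℝ) := by
      rcases le_or_gt b (⌊X⌋₊ + 1) with h | h
      · rw [Nat.cast_sub h]; push_cast; linarith
      · have he : ⌊X⌋₊ + 1 - b = 0 := by omega
        rw [he]
        have h7 : (⌊X⌋₊:ℝ) + 1 < (b:ℝ) := by exact_mod_cast h
        norm_num
        linarith
    have h7 : X - (b:ℝ) ≤ (N:ℝ) := by linarith
    linarith [hbx]
  have hNnn : (0:ℝ) ≤ N := Nat.cast_nonneg N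
  have hNineq : N*(N+b)*(N+2*b) + 6*N*(N+b) + 6*(N+2) ≤ 6*n := by
    have hcast : ((N:ℝ)*((N:ℝ)+(b:ℝ))*((N:ℝ)+2*(b:ℝ)) + 6*(N:ℝ)*((N:ℝ)+(b:ℝ))
        + 6*((N:ℝ)+2) ≤ 6*(n:ℝ)) := by
      obtain ⟨y, hy⟩ : ∃ y : ℝ, y = A*(1-6/M)*x := ⟨_, rfl⟩
      have h16 : (0:ℝ) ≤ 1-6/M := by
        rw [sub_nonneg, div_le_one hM0]; linarith
      have h161 : (1-6/M) ≤ 1 := by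
        have : (0:ℝ) ≤ 6/M := by positivity
        linarith
      have hy0 : 0 ≤ y := by rw [hy]; positivity
      have hyx : y ≤ 2*x := by
        rw [hy]
        exact aux_mul2 (by linarith) hA2 h16 h161 hx0.le
      have hNb2 : (N:ℝ) + 2*(b:ℝ) ≤ y := by
        have h1 : (N:ℝ) + 2*(b:ℝ) ≤ X + 2*(x/M) := by linarith [hNle, hbx]
        have h2 : X + 2*(x/M) ≤ y := by
          rw [hX, hy]
          have he : A*(1-8/M)*x + 2*(x/M) = A*(1-6/M)*x - ((2*A - 2)/M)*x := by
            field_simp; ring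
          rw [he]
          have h3 : (0:ℝ) ≤ ((2*A-2)/M)*x := by
            have : (0:ℝ) ≤ 2*A-2 := by linarith
            positivity
          linarith
        linarith
      have hbnn : (0:ℝ) ≤ b := by linarith
      have hNb1 : (N:ℝ) + (b:ℝ) ≤ y := by linarith
      have hNy : (N:ℝ) ≤ y := by linarith
      have h1 : (0:ℝ) ≤ (N:ℝ)+(b:ℝ) := by linarith
      have h2 : (0:ℝ) ≤ (N:ℝ)+2*(b:ℝ) := by linarith
      have hsq : (N:ℝ)*((N:ℝ)+(b:ℝ)) ≤ y*y := mul_le_mul hNy hNb1 h1 hy0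
      have hcube : (N:ℝ)*((N:ℝ)+(b:ℝ))*((N:ℝ)+2*(b:ℝ)) ≤ y*y*y :=
        mul_le_mul hsq hNb2 h2 (mul_nonneg hy0 hy0)
      have hy3 : y*y*y ≤ 6*(1-6/M)*(n:ℝ) := by
        have hAx : (A*x)*(A*x)*(A*x) = 6*(n:ℝ) := by
          calc (A*x)*(A*x)*(A*x) = (A^(3:ℕ))*(x^(3:ℕ)) := by ring
          _ = 6*(n:ℝ) := by rw [hA3, hx3]
        have ht := aux_cube_le h16 h161
          (by positivity : (0:ℝ) ≤ (A*x)*(A*x)*(A*x))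
        calc y*y*y = (1-6/M)*(1-6/M)*(1-6/M)*((A*x)*(A*x)*(A*x)) := by rw [hy]; ring
        _ ≤ (1-6/M)*((A*x)*(A*x)*(A*x)) := ht
        _ = 6*(1-6/M)*(n:ℝ) := by rw [hAx]; ring
      have hrem : 6*(y*y) + 6*y + 12 ≤ 36*(n:ℝ)/M := by
        have hx1 : (1:ℝ) ≤ x := by linarith
        have hq1 : y*y ≤ 4*(x*x) := aux_sq hy0 hyx
        have hq2 : 6*y ≤ 12*x := by linarith
        have hxx : 1 ≤ x*x := aux_onele hx1
        have hxxx : x ≤ x*x := aux_xlexx hx1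
        have hq3 : 6*(y*y)+6*y+12 ≤ 48*(x*x) := by linarith [hq1, hq2, hxx, hxxx]
        have hq4 : 48*(x*x) ≤ 36*(x^(3:ℕ))/M := by
          rw [le_div_iff₀ hM0]
          have h48 := aux_48 hx0 hM0 (by linarith : 2*M ≤ x)
          calc 48*(x*x)*M ≤ 36*(x*x*x) := h48
          _ = 36*(x^(3:ℕ)) := by ring
        rw [hx3] at hq4
        linarith
      have hfin : 6*(1-6/M)*(n:ℝ) + 36*(n:ℝ)/M = 6*(n:ℝ) := by
        field_simp
        ring
      calc (N:ℝ)*((N:ℝ)+(b:ℝ))*((N:ℝ)+2*(b:ℝ)) + 6*(N:ℝ)*((N:ℝ)+(b:ℝ)) + 6*((N:ℝ)+2)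
          ≤ y*y*y + 6*(y*y) + (6*y + 12) := by linarith [hsq, hcube, hNy]
      _ ≤ 6*(1-6/M)*(n:ℝ) + 36*(n:ℝ)/M := by linarith
      _ = 6*(n:ℝ) := hfin
    exact_mod_cast hcast
  have hH : T*b*(T*b+b)*(T*b+2*b) + 6*(T*b)*(T*b+b) + 6*(T*b+2) ≤ 6*n := by
    rw [hN] at hNineq
    exact hNineq
  have hwc := factorial_pow_le_wilfCount n T b hH
  have hfact_pos : 0 < Nat.factorial b ^ T := pow_pos (Nat.factorial_pos b) T
  have hlog1 : Real.log ((Nat.factorial b ^ T : ℕ):ℝ) ≤ Real.log (wilfCount n) := by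
    apply Real.log_le_log (by exact_mod_cast hfact_pos)
    exact_mod_cast hwc
  have hlog2 : Real.log ((Nat.factorial b ^ T : ℕ):ℝ) = (T:ℝ) * Real.log (Nat.factorial b) := by
    push_cast
    rw [Real.log_pow]
  have hlog3 : (T:ℝ) * ((b:ℝ)*Real.log b - b) ≤ (T:ℝ) * Real.log (Nat.factorial b) :=
    mul_le_mul_of_nonneg_left (log_factorial b) (Nat.cast_nonneg T)
  have hTb : (T:ℝ)*((b:ℝ)*Real.log b - b) = (N:ℝ)*(Real.log b - 1) := by
    rw [hN]; push_cast; ring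
  have hxM : x/(2*M) ≤ (b:ℝ) := by
    have h1 : x/M - 1 < (b:ℝ) := by
      rw [hb]
      exact Nat.sub_one_lt_floor (x/M)
    have h3 : x/M - x/(2*M) = x/(2*M) := by field_simp; ring
    have h4 : 1 ≤ x/(2*M) := by
      rw [le_div_iff₀ (by positivity)]
      linarith
    linarith
  have hlogb : (1:ℝ)/3 * Real.log n - L ≤ Real.log b - 1 := by
    have h0 : (0:ℝ) < x/(2*M) := by positivity
    have h1 : Real.log (x/(2*M)) ≤ Real.log b := Real.log_le_log h0 hxM
    have h2 : Real.log (x/(2*M)) = Real.log x - Real.log (2*M) :=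
      Real.log_div (ne_of_gt hx0) (by positivity)
    have h3 : Real.log x = 1/3 * Real.log n := by
      rw [hxdef, Real.log_rpow hn0]
    rw [hL]
    rw [h2, h3] at h1
    linarith
  have h3L : 3*L ≤ L0 := by
    rw [hL0, le_div_iff₀ hd0]
    have hLc : 0 ≤ L*c := mul_nonneg (by linarith) hc0
    linarith [hLc]
  have hlogL : 0 ≤ (1:ℝ)/3 * Real.log n - L := by
    have : 3*L ≤ Real.log n := le_trans h3L hlog
    linarith
  have hmain : c * (x * Real.log n) ≤ (γ*x) * ((1:ℝ)/3 * Real.log n - L) := by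
    have h1 : γ*L ≤ (γ/3 - c) * Real.log n := by
      have h2 := mul_le_mul_of_nonneg_left hlog (le_of_lt hd0)
      have h3 : (γ/3 - c) * L0 = γ*L := by
        rw [hL0, mul_comm, div_mul_cancel₀ _ (ne_of_gt hd0)]
      linarith
    linarith [mul_le_mul_of_nonneg_left h1 hx0.le]
  have hNx : γ * x ≤ (N:ℝ) := by
    have he : X - x/M = γ*x := by
      rw [hX, hγ]; field_simp; ring
    linarith [hNge]
  have hchain : (γ*x) * ((1:ℝ)/3*Real.log n - L) ≤ (N:ℝ)*(Real.log b - 1) :=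
    mul_le_mul hNx hlogb hlogL hNnn
  calc c * (x*Real.log n) ≤ (γ*x)*((1:ℝ)/3*Real.log n - L) := hmain
  _ ≤ (N:ℝ)*(Real.log b - 1) := hchain
  _ = (T:ℝ)*((b:ℝ)*Real.log b - b) := hTb.symm
  _ ≤ (T:ℝ)*Real.log (Nat.factorial b) := hlog3
  _ = Real.log ((Nat.factorial b ^ T : ℕ):ℝ) := hlog2.symm
  _ ≤ Real.log (wilfCount n) := hlog1


lemma one_le_wilfCount {n : ℕ} (hn : 2 ≤ n) : 1 ≤ wilfCount n := by
  have h := factorial_pow_le_wilfCount n 0 1 (by simpa using by omega)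
  simpa using h

lemma cube_mono {a x : ℝ} (h0 : 0 ≤ a) (h : a ≤ x) : a*a*a ≤ x*x*x := by
  have hx0 : 0 ≤ x := le_trans h0 h
  have h1 : a*a ≤ x*x := mul_le_mul h h h0 hx0
  calc a*a*a ≤ (x*x)*x := mul_le_mul h1 h (h0) (mul_nonneg hx0 hx0)
  _ = x*x*x := rfl

lemma aux_np1 {z : ℝ} (h : 2 ≤ z) : (z+1)*(z+1) ≤ z^(4:ℕ) := by
  have h1 : z+1 ≤ z*z := by nlinarith
  calc (z+1)*(z+1) ≤ (z*z)*(z*z) := mul_le_mul h1 h1 (by linarith) (by nlinarith)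
  _ = z^(4:ℕ) := by ring

lemma aux_ub {x : ℝ} (h : 9 ≤ x) : 3*(x*x*x) ≤ 4*x*((x-1)*(x-1)) := by nlinarith

lemma aux_ub2 {x : ℝ} (h : 9 ≤ x) : 4*x + 1 ≤ x*x*x := by nlinarith

lemma upper_event : ∀ᶠ n : ℕ in atTop,
    Real.log (wilfCount n) / ((n:ℝ)^((1:ℝ)/3) * Real.log n) ≤ 17 := by
  filter_upwards [tendsto_x.eventually_ge_atTop 9, tendsto_logn.eventually_ge_atTop 1,
    eventually_ge_atTop 2] with n hx hlog hn2
  obtain ⟨x, hxdef⟩ : ∃ x : ℝ, x = (n:ℝ)^((1:ℝ)/3) := ⟨_, rfl⟩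
  rw [← hxdef] at hx ⊢
  have hx0 : (0:ℝ) < x := by linarith
  have hlog0 : (0:ℝ) < Real.log n := by linarith
  have hx3 : x^(3:ℕ) = n := by rw [hxdef]; exact xcube n
  have hxxx : x*x*x = (n:ℝ) := by rw [← hx3]; ring
  obtain ⟨t, ht⟩ : ∃ t : ℕ, t = ⌊x⌋₊ := ⟨_, rfl⟩
  have htx : (t:ℝ) ≤ x := by rw [ht]; exact Nat.floor_le hx0.le
  have htx2 : x - 1 < (t:ℝ) := by rw [ht]; exact Nat.sub_one_lt_floor x
  have ht1 : 1 ≤ t := by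
    rw [ht]; exact Nat.le_floor (by push_cast; linarith)
  have ht0 : 0 < t*t := Nat.mul_pos ht1 ht1
  have ht3 : t*t*t ≤ n := by
    have hr : ((t*t*t : ℕ):ℝ) ≤ (n:ℝ) := by
      push_cast
      calc (t:ℝ)*t*t ≤ x*x*x := cube_mono (Nat.cast_nonneg t) htx
      _ = n := hxxx
    exact_mod_cast hr
  obtain ⟨K, hK⟩ : ∃ K : ℕ, K = (2*(t*t*t) + n) / (t*t) := ⟨_, rfl⟩
  have hKbound : ∀ P : n.Partition, IsWilf P → P.parts.toFinset.card ≤ K := by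
    intro P hP
    rw [hK, Nat.le_div_iff_mul_le ht0]
    exact wilf_card_bound t P hP
  have hcount := wilfCount_le n K hKbound
  -- (K:ℝ) ≤ 4x
  have hx1 : (0:ℝ) < x - 1 := by linarith
  have hsq1 : (0:ℝ) < (x-1)*(x-1) := by positivity
  have h3 : (x-1)*(x-1) ≤ (t:ℝ)*(t:ℝ) := by nlinarith
  have hKtt : K*(t*t) ≤ 2*(t*t*t)+n := by
    rw [hK]; exact Nat.div_mul_le_self _ _
  have hKttR : (K:ℝ)*((t:ℝ)*(t:ℝ)) ≤ 2*((t:ℝ)*(t:ℝ)*(t:ℝ))+(n:ℝ) := by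
    exact_mod_cast hKtt
  have ht3R : (t:ℝ)*(t:ℝ)*(t:ℝ) ≤ (n:ℝ) := by exact_mod_cast ht3
  have hKx : (K:ℝ) ≤ 4*x := by
    have hKnn : (0:ℝ) ≤ (K:ℝ) := Nat.cast_nonneg K
    have hc1 : (K:ℝ)*((x-1)*(x-1)) ≤ (K:ℝ)*((t:ℝ)*(t:ℝ)) :=
      mul_le_mul_of_nonneg_left h3 hKnn
    have hc2 : (K:ℝ)*((x-1)*(x-1)) ≤ 3*(n:ℝ) := by linarith
    have hc3 : 3*(n:ℝ) ≤ 4*x*((x-1)*(x-1)) := by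
      rw [← hxxx]
      exact aux_ub hx
    have hc4 : (K:ℝ)*((x-1)*(x-1)) ≤ (4*x)*((x-1)*(x-1)) := by linarith
    exact le_of_mul_le_mul_right (by linarith) hsq1
  have hKn : (K:ℝ) + 1 ≤ (n:ℝ) := by
    have := aux_ub2 hx
    rw [← hxxx]
    linarith
  -- log chain
  have hwc1 : 1 ≤ wilfCount n := one_le_wilfCount hn2
  have hwcpos : (0:ℝ) < ((wilfCount n : ℕ):ℝ) := by exact_mod_cast hwc1
  have hstep1 : Real.log (wilfCount n) ≤ Real.log (((K+1) * ((n+1)*(n+1))^K : ℕ):ℝ) :=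
    Real.log_le_log hwcpos (by exact_mod_cast hcount)
  have hsplit : Real.log (((K+1) * ((n+1)*(n+1))^K : ℕ):ℝ)
      = Real.log ((K:ℝ)+1) + (K:ℝ)*Real.log (((n:ℝ)+1)*((n:ℝ)+1)) := by
    push_cast
    rw [Real.log_mul (by positivity) (by positivity), Real.log_pow]
  have hn0 : (2:ℝ) ≤ (n:ℝ) := by exact_mod_cast hn2
  have hK1 : Real.log ((K:ℝ)+1) ≤ Real.log n :=
    Real.log_le_log (by positivity) (by linarith)
  have hn1log : Real.log (((n:ℝ)+1)*((n:ℝ)+1)) ≤ 4*Real.log n := by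
    have h1 : ((n:ℝ)+1)*((n:ℝ)+1) ≤ ((n:ℝ)^(4:ℕ)) := aux_np1 hn0
    calc Real.log (((n:ℝ)+1)*((n:ℝ)+1)) ≤ Real.log ((n:ℝ)^(4:ℕ)) :=
          Real.log_le_log (by positivity) h1
    _ = 4*Real.log n := by rw [Real.log_pow]; norm_num
  have hlognn : (0:ℝ) ≤ Real.log (((n:ℝ)+1)*((n:ℝ)+1)) :=
    Real.log_nonneg (by nlinarith)
  have hterm : (K:ℝ)*Real.log (((n:ℝ)+1)*((n:ℝ)+1)) ≤ (4*x)*(4*Real.log n) :=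
    mul_le_mul hKx hn1log hlognn (by linarith)
  have htotal : Real.log (wilfCount n) ≤ Real.log n + 16*(x*Real.log n) := by
    have h10 := hstep1
    rw [hsplit] at h10
    linarith only [hterm, hK1, h10]
  rw [div_le_iff₀ (by positivity)]
  have hxlog : Real.log n ≤ x * Real.log n := by
    have h9 := mul_nonneg (by linarith : (0:ℝ) ≤ x - 1) hlog0.le
    linarith only [h9]
  linarith only [htotal, hxlog]

theorem stmt5_aux :
    (6 : ℝ) ^ ((1 : ℝ) / 3) / 3 ≤
      Filter.liminf
        (fun n : ℕ => Real.log (wilfCount n) / ((n : ℝ) ^ ((1 : ℝ) / 3) * Real.log n))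
        Filter.atTop := by
  have hbdd : IsBoundedUnder (· ≤ ·) atTop
      (fun n : ℕ => Real.log (wilfCount n) / ((n : ℝ) ^ ((1 : ℝ) / 3) * Real.log n)) :=
    isBoundedUnder_of_eventually_le upper_event
  have hcob : IsCoboundedUnder (· ≥ ·) atTop
      (fun n : ℕ => Real.log (wilfCount n) / ((n : ℝ) ^ ((1 : ℝ) / 3) * Real.log n)) :=
    hbdd.isCoboundedUnder_flip
  by_contra hlt
  push_neg at hlt
  obtain ⟨d, hd1, hd2⟩ := exists_between hlt
  set c : ℝ := max d 0 with hcdef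
  have hc0 : 0 ≤ c := le_max_right _ _
  have hcA : c < (6:ℝ)^((1:ℝ)/3)/3 := by
    rw [hcdef, max_lt_iff]
    exact ⟨hd2, by positivity⟩
  have hev : ∀ᶠ n : ℕ in atTop,
      c ≤ Real.log (wilfCount n) / ((n : ℝ) ^ ((1 : ℝ) / 3) * Real.log n) := by
    filter_upwards [lower_event hc0 hcA, tendsto_x.eventually_ge_atTop 1,
      tendsto_logn.eventually_ge_atTop 1] with n h1 h2 h3
    rw [le_div_iff₀ (by positivity)]
    exact h1
  have hle : c ≤ Filter.liminf
      (fun n : ℕ => Real.log (wilfCount n) / ((n : ℝ) ^ ((1 : ℝ) / 3) * Real.log n))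
      Filter.atTop := le_liminf_of_le hcob hev
  have : d ≤ c := le_max_left _ _
  linarith


end WilfAux

theorem stmt5 :
    (6 : ℝ) ^ ((1 : ℝ) / 3) / 3 ≤
      Filter.liminf
        (fun n : ℕ => Real.log (wilfCount n) / ((n : ℝ) ^ ((1 : ℝ) / 3) * Real.log n))
        Filter.atTop :=
  WilfAux.stmt5_aux
end

section
/- For all positive integers n and r, the number f(n,r) of Wilf partitions of n with exactly r distinct parts satisfies f(n,r) ≤ p(n,r) · (max_{1 ≤ j ≤ n} d(j))^r, where p(n,r) is the number of partitions of n into exactly r parts and d(j) is the number of positive divisors of j. -/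
namespace WilfAux

variable {n : ℕ}

/-- The multiset of pairs (block total, part) for the distinct parts of `P`. -/
def wpairs (P : n.Partition) : Multiset (ℕ × ℕ) :=
  P.parts.dedup.map fun a => (a * P.parts.count a, a)

lemma mem_wpairs {P : n.Partition} {p : ℕ × ℕ} (hp : p ∈ wpairs P) :
    p.2 ∈ P.parts ∧ p.1 = p.2 * P.parts.count p.2 := by
  simp only [wpairs, Multiset.mem_map, Multiset.mem_dedup] at hp
  obtain ⟨a, ha, rfl⟩ := hp
  exact ⟨ha, rfl⟩

lemma mem_wpairs_self {P : n.Partition} {a : ℕ} (ha : a ∈ P.parts) :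
    (a * P.parts.count a, a) ∈ wpairs P := by
  simp only [wpairs, Multiset.mem_map, Multiset.mem_dedup]
  exact ⟨a, ha, rfl⟩

lemma sum_toFinset (P : n.Partition) :
    ∑ a ∈ P.parts.toFinset, a * P.parts.count a = n := by
  calc ∑ a ∈ P.parts.toFinset, a * P.parts.count a
      = ∑ a ∈ P.parts.toFinset, P.parts.count a • a :=
        Finset.sum_congr rfl fun a _ => by rw [smul_eq_mul, mul_comm]
    _ = P.parts.sum := (Finset.sum_multiset_count P.parts).symm
    _ = n := P.parts_sum

lemma wpair_bounds {P : n.Partition} {p : ℕ × ℕ} (hp : p ∈ wpairs P) :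
    1 ≤ p.2 ∧ p.2 ∣ p.1 ∧ 1 ≤ p.1 ∧ p.1 ≤ n := by
  obtain ⟨hmem, heq⟩ := mem_wpairs hp
  have hpos : 0 < p.2 := P.parts_pos hmem
  have hcnt : 0 < P.parts.count p.2 := Multiset.count_pos.mpr hmem
  have hdvd : p.2 ∣ p.1 := heq ▸ dvd_mul_right _ _
  have h1 : 1 ≤ p.1 := by rw [heq]; exact Nat.one_le_iff_ne_zero.mpr (by positivity)
  refine ⟨hpos, hdvd, h1, ?_⟩
  rw [heq]
  exact le_trans (Finset.single_le_sum (f := fun a => a * P.parts.count a)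
    (fun i _ => Nat.zero_le _) (Multiset.mem_toFinset.mpr hmem)) (le_of_eq (sum_toFinset P))

lemma sum_fst_wpairs (P : n.Partition) : ((wpairs P).map Prod.fst).sum = n := by
  have h1 : ((wpairs P).map Prod.fst) = P.parts.toFinset.val.map fun a => a * P.parts.count a := by
    rw [wpairs, Multiset.map_map, Multiset.toFinset_val]; rfl
  rw [h1]
  exact sum_toFinset P

/-- wpairs determines the partition -/
lemma wpairs_injective {P Q : n.Partition} (h : wpairs P = wpairs Q) : P = Q := by
  ext1
  have hmem : ∀ b, b ∈ P.parts → b ∈ Q.parts ∧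
      P.parts.count b = Q.parts.count b := by
    intro b hb
    have h1 : (b * P.parts.count b, b) ∈ wpairs Q := h ▸ mem_wpairs_self hb
    obtain ⟨hm, he⟩ := mem_wpairs h1
    refine ⟨hm, ?_⟩
    exact Nat.eq_of_mul_eq_mul_left (P.parts_pos hb) he
  have hmem' : ∀ b, b ∈ Q.parts → b ∈ P.parts := by
    intro b hb
    have h1 : (b * Q.parts.count b, b) ∈ wpairs P := h ▸ mem_wpairs_self hb
    exact (mem_wpairs h1).1
  ext b
  by_cases hb : b ∈ P.parts
  · exact (hmem b hb).2
  · have : b ∉ Q.parts := fun hc => hb (hmem' b hc)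
    rw [Multiset.count_eq_zero_of_notMem hb, Multiset.count_eq_zero_of_notMem this]

/-- The block partition -/
def blocks (P : n.Partition) : n.Partition where
  parts := (wpairs P).map Prod.fst
  parts_pos := by
    intro i hi
    rw [Multiset.mem_map] at hi
    obtain ⟨p, hp, rfl⟩ := hi
    exact (wpair_bounds hp).2.2.1
  parts_sum := sum_fst_wpairs P

def codes (P : n.Partition) : Multiset ℕ :=
  (wpairs P).map fun p => (n + 1) * p.1 + p.2

lemma decode_div {p : ℕ × ℕ} (h : p.2 ≤ n) : ((n + 1) * p.1 + p.2) / (n + 1) = p.1 := by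
  rw [Nat.mul_add_div (Nat.succ_pos n), Nat.div_eq_of_lt (Nat.lt_succ_of_le h), add_zero]

lemma decode_mod {p : ℕ × ℕ} (h : p.2 ≤ n) : ((n + 1) * p.1 + p.2) % (n + 1) = p.2 := by
  rw [Nat.mul_add_mod, Nat.mod_eq_of_lt (Nat.lt_succ_of_le h)]

lemma snd_le {P : n.Partition} {p : ℕ × ℕ} (hp : p ∈ wpairs P) : p.2 ≤ n := by
  obtain ⟨h2, hdvd, h1, hn⟩ := wpair_bounds hp
  exact le_trans (Nat.le_of_dvd h1 hdvd) hn

lemma code_mem {P : n.Partition} {c : ℕ} (hc : c ∈ codes P) :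
    (c / (n + 1), c % (n + 1)) ∈ wpairs P := by
  rw [codes, Multiset.mem_map] at hc
  obtain ⟨p, hp, rfl⟩ := hc
  rw [decode_div (snd_le hp), decode_mod (snd_le hp)]
  exact hp

lemma decode_codes (P : n.Partition) :
    (codes P).map (fun c => ((c / (n + 1), c % (n + 1)) : ℕ × ℕ)) = wpairs P := by
  rw [codes, Multiset.map_map]
  calc (wpairs P).map ((fun c => ((c / (n + 1), c % (n + 1)) : ℕ × ℕ)) ∘
        fun p => (n + 1) * p.1 + p.2)
      = (wpairs P).map id := Multiset.map_congr rfl (fun p hp => by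
        simp only [Function.comp_apply, decode_div (snd_le hp), decode_mod (snd_le hp), id_eq])
    _ = wpairs P := Multiset.map_id _

lemma codes_fst (P : n.Partition) :
    (codes P).map (fun c => c / (n + 1)) = (blocks P).parts := by
  have : (codes P).map (fun c => c / (n + 1)) =
      ((codes P).map (fun c => ((c / (n + 1), c % (n + 1)) : ℕ × ℕ))).map Prod.fst := by
    rw [Multiset.map_map]; rfl
  rw [this, decode_codes]; rfl

def clist (P : n.Partition) : List ℕ := (codes P).sort (· ≤ ·)

lemma clist_coe (P : n.Partition) : (clist P : Multiset ℕ) = codes P :=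
  Multiset.sort_eq _ _

lemma clist_length (P : n.Partition) : (clist P).length = P.parts.toFinset.card := by
  rw [clist, Multiset.length_sort, codes, Multiset.card_map, wpairs, Multiset.card_map,
    Multiset.card_toFinset]

lemma mem_clist {P : n.Partition} {c : ℕ} (hc : c ∈ clist P) : c ∈ codes P :=
  (Multiset.mem_sort _).mp hc

lemma clist_sorted (P : n.Partition) : (clist P).Pairwise (· ≤ ·) :=
  Multiset.pairwise_sort _ _

lemma tlist_sorted (P : n.Partition) : ((clist P).map (· / (n + 1))).Pairwise (· ≤ ·) := by
  rw [List.pairwise_map]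
  exact (clist_sorted P).imp (fun h => Nat.div_le_div_right h)

lemma tlist_coe (P : n.Partition) :
    (((clist P).map (· / (n + 1))) : Multiset ℕ) = (blocks P).parts := by
  rw [← Multiset.map_coe, clist_coe, codes_fst]


/-- decoded divisor index of a code -/
def dindex (n c : ℕ) : ℕ := ((c / (n + 1)).divisors.sort (· ≤ ·)).idxOf (c % (n + 1))

lemma mod_mem_divisors {P : n.Partition} {c : ℕ} (hc : c ∈ codes P) :
    c % (n + 1) ∈ (c / (n + 1)).divisors := by
  obtain ⟨h2, hdvd, h1, hle⟩ := wpair_bounds (code_mem hc)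
  exact Nat.mem_divisors.mpr ⟨hdvd, Nat.one_le_iff_ne_zero.mp h1⟩

lemma dindex_lt {P : n.Partition} {c : ℕ} (hc : c ∈ codes P) :
    dindex n c < (Finset.Icc 1 n).sup fun j => j.divisors.card := by
  obtain ⟨h2, hdvd, h1, hle⟩ := wpair_bounds (code_mem hc)
  have hlt := List.idxOf_lt_length_iff.mpr ((Finset.mem_sort (α := ℕ) (· ≤ ·)).mpr (mod_mem_divisors hc))
  rw [Finset.length_sort] at hlt
  exact lt_of_lt_of_le hlt (Finset.le_sup (f := fun j => j.divisors.card) (Finset.mem_Icc.mpr ⟨h1, hle⟩))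

lemma main_inj {P Q : n.Partition} (hb : blocks P = blocks Q)
    (hf : ∀ (i : ℕ) (h1 : i < (clist P).length) (h2 : i < (clist Q).length),
      dindex n ((clist P).get ⟨i, h1⟩) = dindex n ((clist Q).get ⟨i, h2⟩)) : P = Q := by
  have htl : (clist P).map (· / (n + 1)) = (clist Q).map (· / (n + 1)) :=
    List.Perm.eq_of_pairwise' (hl := Multiset.coe_eq_coe.mp
      (by rw [tlist_coe, tlist_coe, hb])) (tlist_sorted P) (tlist_sorted Q)
  have hlen : (clist P).length = (clist Q).length := by
    have := congrArg List.length htl; simpa using this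
  have hclist : clist P = clist Q := by
    apply List.ext_get hlen
    intro i h1 h2
    set c := (clist P).get ⟨i, h1⟩ with hc
    set c' := (clist Q).get ⟨i, h2⟩ with hc'
    have hcm : c ∈ codes P := mem_clist (List.get_mem _ _)
    have hcm' : c' ∈ codes Q := mem_clist (List.get_mem _ _)
    have ht : c / (n + 1) = c' / (n + 1) := by
      have h1' : i < ((clist P).map (· / (n + 1))).length := by simpa using h1
      have h2' : i < ((clist Q).map (· / (n + 1))).length := by simpa using h2
      have := List.get_of_eq htl ⟨i, h1'⟩
      simpa [hc, hc'] using this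
    have ha : c % (n + 1) = c' % (n + 1) := by
      have hi := hf i h1 h2
      rw [dindex, dindex, ← ht] at hi
      have hm : c % (n + 1) ∈ (c / (n + 1)).divisors.sort (· ≤ ·) :=
        (Finset.mem_sort (α := ℕ) (· ≤ ·)).mpr (mod_mem_divisors hcm)
      have hm' : c' % (n + 1) ∈ (c / (n + 1)).divisors.sort (· ≤ ·) := by
        rw [ht]; exact (Finset.mem_sort (α := ℕ) (· ≤ ·)).mpr (mod_mem_divisors hcm')
      have e1 := List.idxOf_get (a := c % (n + 1))
        (l := (c / (n + 1)).divisors.sort (· ≤ ·)) (List.idxOf_lt_length_iff.mpr hm)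
      have e2 := List.idxOf_get (a := c' % (n + 1))
        (l := (c / (n + 1)).divisors.sort (· ≤ ·)) (List.idxOf_lt_length_iff.mpr hm')
      rw [← e1, ← e2]
      congr 1
      exact Fin.ext hi
    have d1 := Nat.div_add_mod c (n + 1)
    have d2 := Nat.div_add_mod c' (n + 1)
    rw [ht, ha] at d1
    omega
  apply wpairs_injective
  rw [← decode_codes P, ← decode_codes Q, ← clist_coe, ← clist_coe, hclist]

end WilfAux

/-- `wilfCountR n r` is the number of Wilf partitions of `n` with exactly `r` distinct parts. -/
noncomputable def wilfCountR (n r : ℕ) : ℕ :=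
  Nat.card {P : n.Partition // IsWilf P ∧ P.parts.toFinset.card = r}

/-- `partitionCount n r` is the number of partitions of `n` into exactly `r` parts. -/
noncomputable def partitionCount (n r : ℕ) : ℕ :=
  Nat.card {P : n.Partition // Multiset.card P.parts = r}

theorem stmt6 (n r : ℕ) (hn : 0 < n) (hr : 0 < r) :
    wilfCountR n r ≤
      partitionCount n r * ((Finset.Icc 1 n).sup fun j => j.divisors.card) ^ r := by
  classical
  set D := (Finset.Icc 1 n).sup fun j => j.divisors.card with hD
  let Φ : {P : n.Partition // IsWilf P ∧ P.parts.toFinset.card = r} →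
      {P : n.Partition // Multiset.card P.parts = r} × (Fin r → Fin D) := fun x =>
    ⟨⟨WilfAux.blocks x.1, by
        show Multiset.card ((WilfAux.wpairs x.1).map Prod.fst) = r
        rw [Multiset.card_map, WilfAux.wpairs, Multiset.card_map,
          ← Multiset.card_toFinset]
        exact x.2.2⟩,
      fun i => ⟨WilfAux.dindex n ((WilfAux.clist x.1).get
          ⟨i.1, by rw [WilfAux.clist_length, x.2.2]; exact i.isLt⟩),
        WilfAux.dindex_lt (WilfAux.mem_clist (List.get_mem _ _))⟩⟩
  have hΦ : Function.Injective Φ := by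
    intro x y h
    have hb : WilfAux.blocks x.1 = WilfAux.blocks y.1 :=
      Subtype.ext_iff.mp (congrArg Prod.fst h)
    have hfun := congrArg Prod.snd h
    apply Subtype.ext
    apply WilfAux.main_inj hb
    intro i h1 h2
    have hi : i < r := by rw [WilfAux.clist_length, x.2.2] at h1; exact h1
    have := congrFun hfun ⟨i, hi⟩
    exact Fin.val_eq_of_eq this
  have hle : wilfCountR n r ≤
      Nat.card ({P : n.Partition // Multiset.card P.parts = r} × (Fin r → Fin D)) := by
    rw [wilfCountR]
    exact Nat.card_le_card_of_injective Φ hΦ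
  refine le_trans hle (le_of_eq ?_)
  rw [Nat.card_prod, partitionCount]
  congr 1
  simp [Nat.card_eq_fintype_card]
end

section
/- There exists a constant C > 0 and an integer N such that for all n ≥ N and all positive integers r, the number f(n,r) of Wilf partitions of n with exactly r distinct parts satisfies f(n,r) ≤ p(n,r) · exp(C·r·(ln n)/(ln ln n)), where p(n,r) is the number of partitions of n into exactly r parts. -/
private lemma exists_list_of_map_eq {α β : Type*} (g : α → β) (q : List β) :
    ∀ (T : Multiset α), T.map g = ↑q → ∃ L : List α, (L : Multiset α) = T ∧ L.map g = q := by
  induction q with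
  | nil =>
    intro T h
    have h0 : T.map g = 0 := by simpa using h
    have hT : T = 0 := Multiset.map_eq_zero.mp h0
    exact ⟨[], by simp [hT], rfl⟩
  | cons x q ih =>
    intro T h
    have hx : x ∈ T.map g := by rw [h]; simp
    obtain ⟨p, hpT, hgp⟩ := Multiset.mem_map.mp hx
    obtain ⟨T', rfl⟩ := Multiset.exists_cons_of_mem hpT
    rw [Multiset.map_cons, ← Multiset.cons_coe, hgp] at h
    have h' : T'.map g = ↑q := (Multiset.cons_inj_right x).mp h
    obtain ⟨L, hL1, hL2⟩ := ih T' h'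
    exact ⟨p :: L, by rw [← Multiset.cons_coe, hL1], by simp [hgp, hL2]⟩

def pairM {n : ℕ} (P : n.Partition) : Multiset (ℕ × ℕ) :=
  P.parts.toFinset.val.map fun a => (a, P.parts.count a)

lemma pairM_card {n : ℕ} (P : n.Partition) :
    Multiset.card (pairM P) = P.parts.toFinset.card := by
  simp [pairM, Finset.card]

lemma pairM_pos {n : ℕ} {P : n.Partition} {p : ℕ × ℕ} (hp : p ∈ pairM P) :
    0 < p.1 ∧ 0 < p.2 := by
  obtain ⟨a, ha, rfl⟩ := Multiset.mem_map.mp hp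
  have ha' : a ∈ P.parts := by simpa using ha
  exact ⟨P.parts_pos ha', Multiset.count_pos.mpr ha'⟩

lemma pairM_recover {n : ℕ} (P : n.Partition) :
    ((pairM P).map fun p => Multiset.replicate p.2 p.1).sum = P.parts := by
  have h := Multiset.toFinset_sum_count_nsmul_eq P.parts
  simp only [Finset.sum_eq_multiset_sum, Multiset.nsmul_singleton] at h
  simpa [pairM, Multiset.map_map, Function.comp] using h

private lemma sum_sum_replicate (T : Multiset (ℕ × ℕ)) :
    ((T.map fun p => Multiset.replicate p.2 p.1).sum).sum
      = (T.map fun p => p.1 * p.2).sum := by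
  induction T using Multiset.induction with
  | empty => simp
  | cons p T ih => simp [Multiset.sum_replicate, ih, mul_comm]

def encQ {n : ℕ} (P : n.Partition) : n.Partition where
  parts := (pairM P).map fun p => p.1 * p.2
  parts_pos := by
    intro i hi
    obtain ⟨p, hp, rfl⟩ := Multiset.mem_map.mp hi
    obtain ⟨h1, h2⟩ := pairM_pos hp
    exact Nat.mul_pos h1 h2
  parts_sum := by
    rw [← sum_sum_replicate, pairM_recover]
    exact P.parts_sum

lemma encQ_card {n : ℕ} (P : n.Partition) :
    Multiset.card (encQ P).parts = P.parts.toFinset.card := by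
  simp only [encQ, Multiset.card_map, pairM_card]

noncomputable def encL {n : ℕ} (P : n.Partition) : List (ℕ × ℕ) :=
  Classical.choose (exists_list_of_map_eq (fun p : ℕ × ℕ => p.1 * p.2)
    (Multiset.sort (encQ P).parts (· ≤ ·)) (pairM P)
    (by rw [Multiset.sort_eq]; rfl))

lemma encL_coe {n : ℕ} (P : n.Partition) : (↑(encL P) : Multiset (ℕ × ℕ)) = pairM P :=
  (Classical.choose_spec (exists_list_of_map_eq (fun p : ℕ × ℕ => p.1 * p.2)
    (Multiset.sort (encQ P).parts (· ≤ ·)) (pairM P) (by rw [Multiset.sort_eq]; rfl))).1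

lemma encL_map {n : ℕ} (P : n.Partition) :
    (encL P).map (fun p : ℕ × ℕ => p.1 * p.2) = Multiset.sort (encQ P).parts (· ≤ ·) :=
  (Classical.choose_spec (exists_list_of_map_eq (fun p : ℕ × ℕ => p.1 * p.2)
    (Multiset.sort (encQ P).parts (· ≤ ·)) (pairM P) (by rw [Multiset.sort_eq]; rfl))).2

lemma encL_length {n : ℕ} (P : n.Partition) :
    (encL P).length = P.parts.toFinset.card := by
  have := congrArg Multiset.card (encL_coe P)
  simpa [pairM_card] using this

lemma encL_mem_pairM {n : ℕ} (P : n.Partition) (i : ℕ) (hi : i < (encL P).length) :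
    (encL P)[i] ∈ pairM P := by
  rw [← encL_coe P]
  exact List.getElem_mem hi

lemma encL_prod_mem {n : ℕ} (P : n.Partition) (i : ℕ) (hi : i < (encL P).length) :
    ((encL P)[i]).1 * ((encL P)[i]).2 ∈ (encQ P).parts := by
  have h1 : ((encL P)[i]).1 * ((encL P)[i]).2
      ∈ (encL P).map (fun p : ℕ × ℕ => p.1 * p.2) :=
    List.mem_map_of_mem (List.getElem_mem hi)
  rw [encL_map] at h1
  exact (Multiset.mem_sort _).mp h1

noncomputable def divMax (n : ℕ) : ℕ := (Finset.Icc 1 n).sup fun k => k.divisors.card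

noncomputable def encF {n : ℕ} (P : n.Partition) (i : ℕ) : ℕ :=
  if hi : i < (encL P).length then
    List.idxOf ((encL P)[i]).1
      ((((encL P)[i]).1 * ((encL P)[i]).2).divisors.sort (· ≤ ·))
  else 0

lemma encL_fst_mem_divisors {n : ℕ} (P : n.Partition) (i : ℕ) (hi : i < (encL P).length) :
    ((encL P)[i]).1 ∈ (((encL P)[i]).1 * ((encL P)[i]).2).divisors := by
  obtain ⟨h1, h2⟩ := pairM_pos (encL_mem_pairM P i hi)
  exact Nat.mem_divisors.mpr ⟨dvd_mul_right _ _, (Nat.mul_pos h1 h2).ne'⟩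

lemma encF_lt {n : ℕ} (P : n.Partition) (i : ℕ) (hi : i < (encL P).length) :
    encF P i < divMax n := by
  rw [encF, dif_pos hi]
  have hmem := encL_fst_mem_divisors P i hi
  have hlt : List.idxOf ((encL P)[i]).1
      ((((encL P)[i]).1 * ((encL P)[i]).2).divisors.sort (· ≤ ·))
      < ((((encL P)[i]).1 * ((encL P)[i]).2).divisors.sort (· ≤ ·)).length :=
    List.idxOf_lt_length_iff.mpr (by rwa [Finset.mem_sort])
  rw [Finset.length_sort] at hlt
  refine lt_of_lt_of_le hlt ?_
  have hv := encL_prod_mem P i hi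
  have hpos := (encQ P).parts_pos hv
  have hle : ((encL P)[i]).1 * ((encL P)[i]).2 ≤ n := by
    have := Multiset.le_sum_of_mem hv
    rwa [(encQ P).parts_sum] at this
  exact Finset.le_sup (f := fun k => k.divisors.card) (Finset.mem_Icc.mpr ⟨hpos, hle⟩)

lemma enc_inj {n : ℕ} (P₁ P₂ : n.Partition) (hQ : encQ P₁ = encQ P₂)
    (hf : ∀ i, i < (encL P₁).length → encF P₁ i = encF P₂ i) : P₁ = P₂ := by
  have hlen : (encL P₁).length = (encL P₂).length := by
    rw [encL_length, encL_length, ← encQ_card, ← encQ_card, hQ]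
  have hmap : (encL P₁).map (fun p : ℕ × ℕ => p.1 * p.2)
      = (encL P₂).map (fun p : ℕ × ℕ => p.1 * p.2) := by
    rw [encL_map, encL_map, hQ]
  have hL : encL P₁ = encL P₂ := by
    apply List.ext_getElem hlen
    intro i h1 h2
    have hm1 : i < ((encL P₁).map (fun p : ℕ × ℕ => p.1 * p.2)).length := by simpa using h1
    have h3 := List.getElem_of_eq hmap hm1
    simp only [List.getElem_map] at h3
    have hprod : ((encL P₁)[i]).1 * ((encL P₁)[i]).2
        = ((encL P₂)[i]).1 * ((encL P₂)[i]).2 := h3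
    have hfst : ((encL P₁)[i]).1 = ((encL P₂)[i]).1 := by
      have he := hf i h1
      rw [encF, dif_pos h1, encF, dif_pos h2, ← hprod] at he
      have m1 := encL_fst_mem_divisors P₁ i h1
      have m2 := encL_fst_mem_divisors P₂ i h2
      rw [← hprod] at m2
      exact (List.idxOf_inj (by rwa [Finset.mem_sort])).mp he
    have hsnd : ((encL P₁)[i]).2 = ((encL P₂)[i]).2 := by
      have hpos := (pairM_pos (encL_mem_pairM P₁ i h1)).1
      apply Nat.eq_of_mul_eq_mul_left hpos
      rw [hprod, hfst]
    exact Prod.ext hfst hsnd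
  have hpair : pairM P₁ = pairM P₂ := by
    rw [← encL_coe, ← encL_coe, hL]
  apply Nat.Partition.ext
  rw [← pairM_recover P₁, ← pairM_recover P₂, hpair]

lemma wilfCountR_le (n r : ℕ) :
    wilfCountR n r ≤ partitionCount n r * divMax n ^ r := by
  classical
  have key : wilfCountR n r ≤
      Nat.card ({Q : n.Partition // Multiset.card Q.parts = r} × (Fin r → Fin (divMax n))) := by
    apply Nat.card_le_card_of_injective
      (f := fun P : {P : n.Partition // IsWilf P ∧ P.parts.toFinset.card = r} =>
        (⟨encQ P.1, by rw [encQ_card]; exact P.2.2⟩,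
         fun i : Fin r => ⟨encF P.1 i,
           encF_lt P.1 i (by rw [encL_length, P.2.2]; exact i.2)⟩))
    intro P₁ P₂ h
    rw [Prod.ext_iff] at h
    obtain ⟨h1, h2⟩ := h
    have hQ : encQ P₁.1 = encQ P₂.1 := Subtype.ext_iff.mp h1
    have hf : ∀ i, i < (encL P₁.1).length → encF P₁.1 i = encF P₂.1 i := by
      intro i hi
      have hir : i < r := by rwa [encL_length, P₁.2.2] at hi
      exact congrArg Fin.val (congrFun h2 ⟨i, hir⟩)
    exact Subtype.ext (enc_inj P₁.1 P₂.1 hQ hf)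
  rw [Nat.card_prod, Nat.card_eq_fintype_card (α := Fin r → Fin (divMax n)),
    Fintype.card_fun] at key
  simpa [partitionCount] using key


private lemma log_le_rpow {t : ℝ} (ht : 1 ≤ t) : Real.log t ≤ 8 * t ^ (8⁻¹ : ℝ) := by
  have h0 : (0:ℝ) < t := lt_of_lt_of_le one_pos ht
  have h1 : Real.log (t ^ (8⁻¹ : ℝ)) = 8⁻¹ * Real.log t := Real.log_rpow h0 _
  have h2 : Real.log (t ^ (8⁻¹ : ℝ)) ≤ t ^ (8⁻¹ : ℝ) - 1 :=
    Real.log_le_sub_one_of_pos (Real.rpow_pos_of_pos h0 _)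
  have h3 : (0:ℝ) < t ^ (8⁻¹ : ℝ) := Real.rpow_pos_of_pos h0 _
  linarith [h1 ▸ h2]


set_option maxHeartbeats 2000000 in
lemma divisors_card_le {n k : ℕ} (hk : 0 < k) (hkn : k ≤ n)
    (hn : Real.exp 268435456 ≤ (n : ℝ)) :
    (k.divisors.card : ℝ) ≤ Real.exp (4 * Real.log n / Real.log (Real.log n)) := by
  classical
  have hn0 : (0:ℝ) < n := lt_of_lt_of_le (Real.exp_pos _) hn
  set x := Real.log n with hxdef
  have hx1 : (268435456:ℝ) ≤ x := by
    have := Real.log_le_log (Real.exp_pos _) hn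
    rwa [Real.log_exp] at this
  have hx0 : (0:ℝ) < x := by linarith
  set y := Real.log x with hydef
  have hy1 : (1:ℝ) ≤ y := by
    have h3 : Real.exp 1 ≤ x := by
      have := Real.exp_one_lt_d9
      linarith
    have := Real.log_le_log (Real.exp_pos _) h3
    rwa [Real.log_exp] at this
  have hy0 : (0:ℝ) < y := by linarith
  -- rpow facts
  set p8 := x ^ (8⁻¹ : ℝ) with hp8def
  set p4 := x ^ (4⁻¹ : ℝ) with hp4def
  set p2 := x ^ (2⁻¹ : ℝ) with hp2def
  have hp8pos : (0:ℝ) < p8 := Real.rpow_pos_of_pos hx0 _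
  have hp4pos : (0:ℝ) < p4 := Real.rpow_pos_of_pos hx0 _
  have hp2pos : (0:ℝ) < p2 := Real.rpow_pos_of_pos hx0 _
  have h88 : p8 * p8 = p4 := by
    rw [hp8def, hp4def, ← Real.rpow_add hx0]; norm_num
  have h44 : p4 * p4 = p2 := by
    rw [hp4def, hp2def, ← Real.rpow_add hx0]; norm_num
  have h22 : p2 * p2 = x := by
    rw [hp2def, ← Real.rpow_add hx0]; norm_num
  have hp4ge : (128:ℝ) ≤ p4 := by
    have h1 : ((128:ℝ) ^ (4:ℕ)) ^ (4⁻¹ : ℝ) ≤ p4 := by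
      rw [hp4def]
      apply Real.rpow_le_rpow (by positivity) _ (by norm_num)
      norm_num at hx1 ⊢
      linarith
    calc (128:ℝ) = ((128:ℝ) ^ (4:ℕ)) ^ (4⁻¹ : ℝ) := by
          rw [← Real.rpow_natCast (128:ℝ) 4, ← Real.rpow_mul (by norm_num)]
          norm_num
      _ ≤ p4 := h1
  have hy8 : y ≤ 8 * p8 := log_le_rpow (by linarith)
  -- key numeric fact: 2 * y^2 ≤ p2
  have hkey : 2 * y ^ 2 ≤ p2 := by nlinarith
  have hp2ge1 : (1:ℝ) ≤ p2 := by nlinarith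
  -- log of 3x
  have hlog3x : Real.log (3 * x) ≤ 2 * y := by
    rw [Real.log_mul (by norm_num) (ne_of_gt hx0)]
    have h3 : Real.log 3 ≤ y := by
      have := Real.log_le_log (by norm_num : (0:ℝ) < 3) (by linarith : (3:ℝ) ≤ x)
      linarith
    linarith
  have hlog3xpos : (0:ℝ) ≤ Real.log (3 * x) := Real.log_nonneg (by nlinarith)
  -- the divisor function
  have hk0 : k ≠ 0 := hk.ne'
  have hcast : (k.divisors.card : ℝ) = ∏ p ∈ k.primeFactors, ((k.factorization p : ℝ) + 1) := by
    rw [Nat.card_divisors hk0]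
    push_cast
    rfl
  set S := k.primeFactors.filter (fun p : ℕ => (p:ℝ) ≤ p2) with hSdef
  set T := k.primeFactors.filter (fun p : ℕ => ¬ ((p:ℝ) ≤ p2)) with hTdef
  have hsplit : (k.divisors.card : ℝ) =
      (∏ p ∈ S, ((k.factorization p : ℝ) + 1)) * ∏ p ∈ T, ((k.factorization p : ℝ) + 1) := by
    rw [hcast, hSdef, hTdef, Finset.prod_filter_mul_prod_filter_not]
  -- exponent bound for every prime
  have hexp_le : ∀ p ∈ k.primeFactors, (k.factorization p : ℝ) ≤ 2 * x := by
    intro p hp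
    have hprime : p.Prime := Nat.prime_of_mem_primeFactors hp
    have hdvd : p ^ k.factorization p ∣ k := Nat.ordProj_dvd k p
    have hle : p ^ k.factorization p ≤ n := le_trans (Nat.le_of_dvd hk hdvd) hkn
    have h2le : (2:ℕ) ^ k.factorization p ≤ n :=
      le_trans (Nat.pow_le_pow_left hprime.two_le _) hle
    have h2r : ((2:ℝ)) ^ k.factorization p ≤ (n:ℝ) := by exact_mod_cast h2le
    have hlog : (k.factorization p : ℝ) * Real.log 2 ≤ x := by
      have := Real.log_le_log (by positivity) h2r
      rwa [Real.log_pow] at this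
    nlinarith [Real.log_two_gt_d9, (k.factorization p).cast_nonneg (α := ℝ)]
  -- small prime bound
  have hcardS : (S.card : ℝ) ≤ p2 := by
    have hsub : S ⊆ Finset.Icc 2 ⌊p2⌋₊ := by
      intro p hp
      rw [hSdef, Finset.mem_filter] at hp
      exact Finset.mem_Icc.mpr ⟨(Nat.prime_of_mem_primeFactors hp.1).two_le, Nat.le_floor hp.2⟩
    have h1 : S.card ≤ ⌊p2⌋₊ + 1 - 2 := by
      have := Finset.card_le_card hsub
      rwa [Nat.card_Icc] at this
    have h2 : (⌊p2⌋₊ : ℝ) ≤ p2 := Nat.floor_le hp2pos.le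
    have h3 : (S.card : ℕ) ≤ ⌊p2⌋₊ := le_trans h1 (by omega)
    calc (S.card : ℝ) ≤ (⌊p2⌋₊ : ℝ) := by exact_mod_cast h3
      _ ≤ p2 := h2
  have hsmall : (∏ p ∈ S, ((k.factorization p : ℝ) + 1)) ≤ Real.exp (x / y) := by
    have h1 : (∏ p ∈ S, ((k.factorization p : ℝ) + 1)) ≤ ∏ _p ∈ S, (3 * x) := by
      apply Finset.prod_le_prod
      · intro p _; positivity
      · intro p hp
        have := hexp_le p (Finset.mem_of_mem_filter p hp)
        linarith
    have h2 : (∏ _p ∈ S, (3*x)) = Real.exp ((S.card : ℝ) * Real.log (3*x)) := by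
      rw [Finset.prod_const, Real.exp_nat_mul, Real.exp_log (by positivity)]
    have h3 : (S.card : ℝ) * Real.log (3*x) ≤ x / y := by
      have hc1 : (S.card : ℝ) * Real.log (3*x) ≤ p2 * (2*y) := by
        apply mul_le_mul hcardS hlog3x hlog3xpos hp2pos.le
      have : p2 * (2*y) * y ≤ x := by nlinarith
      rw [le_div_iff₀ hy0]
      nlinarith [hc1, this, hy0.le]
    calc (∏ p ∈ S, ((k.factorization p : ℝ) + 1)) ≤ ∏ _p ∈ S, (3*x) := h1
      _ = Real.exp ((S.card : ℝ) * Real.log (3*x)) := h2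
      _ ≤ Real.exp (x / y) := Real.exp_le_exp.mpr h3
  -- big prime bound
  have hprodk : ∏ p ∈ k.primeFactors, p ^ k.factorization p = k := by
    rw [← Nat.support_factorization]
    exact Nat.factorization_prod_pow_eq_self hk0
  have hTdvd : ∏ p ∈ T, p ^ k.factorization p ∣ k := by
    have h := Finset.prod_dvd_prod_of_subset T k.primeFactors
      (fun p => p ^ k.factorization p) (by rw [hTdef]; exact Finset.filter_subset _ _)
    rwa [hprodk] at h
  have hTle : (∏ p ∈ T, (p:ℝ) ^ k.factorization p) ≤ (n:ℝ) := by
    have h1 : ∏ p ∈ T, p ^ k.factorization p ≤ n :=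
      le_trans (Nat.le_of_dvd hk hTdvd) hkn
    exact_mod_cast h1
  set E := ∑ p ∈ T, k.factorization p with hEdef
  have hBE : p2 ^ E ≤ (n:ℝ) := by
    have h1 : p2 ^ E = ∏ p ∈ T, p2 ^ k.factorization p := (Finset.prod_pow_eq_pow_sum T _ _).symm
    rw [h1]
    refine le_trans (Finset.prod_le_prod ?_ ?_) hTle
    · intro p _; positivity
    · intro p hp
      rw [hTdef, Finset.mem_filter] at hp
      exact pow_le_pow_left₀ hp2pos.le (le_of_lt (lt_of_not_ge hp.2)) _
  have hE : (E : ℝ) ≤ 2 * x / y := by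
    have h1 : (E:ℝ) * Real.log p2 ≤ x := by
      have := Real.log_le_log (by positivity) hBE
      rwa [Real.log_pow] at this
    have h2 : Real.log p2 = y / 2 := by
      rw [hp2def, Real.log_rpow hx0]
      ring
    rw [h2] at h1
    rw [le_div_iff₀ hy0]
    linarith
  have hbig : (∏ p ∈ T, ((k.factorization p : ℝ) + 1)) ≤ Real.exp (2 * x / y) := by
    have h1 : (∏ p ∈ T, ((k.factorization p : ℝ) + 1)) ≤ ∏ p ∈ T, (2:ℝ) ^ k.factorization p := by
      apply Finset.prod_le_prod
      · intro p _; positivity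
      · intro p _
        have h2 : k.factorization p + 1 ≤ 2 ^ k.factorization p :=
          Nat.succ_le_of_lt Nat.lt_two_pow_self
        exact_mod_cast h2
    have h2 : (∏ p ∈ T, (2:ℝ) ^ k.factorization p) = (2:ℝ) ^ E :=
      Finset.prod_pow_eq_pow_sum T _ _
    have h3 : (2:ℝ) ^ E = Real.exp ((E:ℝ) * Real.log 2) := by
      rw [Real.exp_nat_mul, Real.exp_log (by norm_num)]
    have h4 : (E:ℝ) * Real.log 2 ≤ 2 * x / y := by
      have hE0 : (0:ℝ) ≤ (E:ℝ) := Nat.cast_nonneg _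
      nlinarith [Real.log_two_lt_d9, Real.log_two_gt_d9]
    calc (∏ p ∈ T, ((k.factorization p : ℝ) + 1)) ≤ (2:ℝ) ^ E := h1.trans_eq h2
      _ = Real.exp ((E:ℝ) * Real.log 2) := h3
      _ ≤ Real.exp (2 * x / y) := Real.exp_le_exp.mpr h4
  -- combine
  rw [hsplit]
  have hbignn : (0:ℝ) ≤ ∏ p ∈ T, ((k.factorization p : ℝ) + 1) :=
    Finset.prod_nonneg fun p _ => by positivity
  calc (∏ p ∈ S, ((k.factorization p : ℝ) + 1)) * ∏ p ∈ T, ((k.factorization p : ℝ) + 1)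
      ≤ Real.exp (x / y) * Real.exp (2 * x / y) := by
        apply mul_le_mul hsmall hbig hbignn (Real.exp_nonneg _)
    _ = Real.exp (x / y + 2 * x / y) := (Real.exp_add _ _).symm
    _ ≤ Real.exp (4 * x / y) := by
        apply Real.exp_le_exp.mpr
        rw [← add_div, div_le_div_iff₀ hy0 hy0]
        nlinarith
  
lemma divMax_le {n : ℕ} (hn : Real.exp 268435456 ≤ (n : ℝ)) :
    (divMax n : ℝ) ≤ Real.exp (4 * Real.log n / Real.log (Real.log n)) := by
  have hn1 : 1 ≤ n := by
    by_contra h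
    push_neg at h
    interval_cases n
    · simp at hn
      linarith [Real.exp_pos (268435456:ℝ)]
  obtain ⟨k, hk, hke⟩ := Finset.exists_mem_eq_sup (Finset.Icc 1 n)
    ⟨1, Finset.mem_Icc.mpr ⟨le_refl _, hn1⟩⟩ (fun k => k.divisors.card)
  rw [divMax, hke]
  rw [Finset.mem_Icc] at hk
  exact divisors_card_le hk.1 hk.2 hn


theorem stmt7 :
    ∃ C : ℝ, 0 < C ∧ ∃ N : ℕ, ∀ n : ℕ, N ≤ n → ∀ r : ℕ, 0 < r →
      (wilfCountR n r : ℝ) ≤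
        (partitionCount n r : ℝ) *
          Real.exp (C * r * Real.log n / Real.log (Real.log n)) := by
  refine ⟨4, by norm_num, ⌈Real.exp 268435456⌉₊ + 1, ?_⟩
  intro n hn r hr
  have hn' : Real.exp 268435456 ≤ (n : ℝ) := by
    have h1 : Real.exp 268435456 ≤ (⌈Real.exp 268435456⌉₊ : ℝ) := Nat.le_ceil _
    have h2 : (⌈Real.exp 268435456⌉₊ : ℝ) ≤ (n : ℝ) := by
      exact_mod_cast le_trans (Nat.le_succ _) hn
    linarith
  have h1 := wilfCountR_le n r
  have h2 := divMax_le hn'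
  have hcast : (wilfCountR n r : ℝ) ≤ (partitionCount n r : ℝ) * ((divMax n : ℝ)) ^ r := by
    exact_mod_cast h1
  have h3 : ((divMax n : ℝ)) ^ r ≤ Real.exp (4 * Real.log n / Real.log (Real.log n)) ^ r :=
    pow_le_pow_left₀ (Nat.cast_nonneg _) h2 r
  have h4 : Real.exp (4 * Real.log n / Real.log (Real.log n)) ^ r
      = Real.exp ((4:ℝ) * r * Real.log n / Real.log (Real.log n)) := by
    rw [← Real.exp_nat_mul]
    congr 1
    ring
  calc (wilfCountR n r : ℝ)
      ≤ (partitionCount n r : ℝ) * ((divMax n : ℝ)) ^ r := hcast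
    _ ≤ (partitionCount n r : ℝ) * Real.exp ((4:ℝ) * r * Real.log n / Real.log (Real.log n)) := by
        apply mul_le_mul_of_nonneg_left (h3.trans_eq h4) (Nat.cast_nonneg _)
end

section
/- For every real constant c > 0 there exists a constant A > 0 such that for all positive integers n and all integers r with 1 ≤ r ≤ (c·n)^{1/3}, the number p(n,r) of partitions of n into exactly r parts satisfies p(n,r) ≤ A · n^{r-1} / (r!·(r-1)!). -/
open Finset

lemma pow_add_mul_le (t c : ℕ) : ∀ k, t^(k+1) + (k+1)*c*t^k ≤ (t+c)^(k+1) := by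
  intro k
  induction k with
  | zero => simp [pow_succ]
  | succ k ih =>
    calc t^(k+2) + (k+2)*c*t^(k+1)
        ≤ t^(k+2) + (k+2)*c*t^(k+1) + (k+1)*c^2*t^k := Nat.le_add_right _ _
      _ = (t+c) * (t^(k+1) + (k+1)*c*t^k) := by ring
      _ ≤ (t+c) * (t+c)^(k+1) := Nat.mul_le_mul_left _ ih
      _ = (t+c)^(k+2) := by ring

lemma G_le_zero (G : ℕ → ℕ) (hG : ∀ v, G (v+1) ≤ G v) : ∀ n, G n ≤ G 0 := by
  intro n; induction n with
  | zero => exact le_refl _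
  | succ n ih => exact (hG n).trans ih

lemma sum_term_le (G : ℕ → ℕ) (hG : ∀ v, G (v+1) ≤ G v) (term : ℕ → ℕ) (n : ℕ)
    (h : ∀ v < n, term v ≤ G v - G (v+1)) : ∑ v ∈ range n, term v ≤ G 0 := by
  have key : ∀ m, (∀ v < m, term v ≤ G v - G (v+1)) → ∑ v ∈ range m, term v ≤ G 0 - G m := by
    intro m
    induction m with
    | zero => simp
    | succ m ih =>
      intro hm
      rw [Finset.sum_range_succ]
      have h1 := ih (fun v hv => hm v (by omega))
      have h2 := hm m (by omega)
      have h3 := hG m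
      have h4 := G_le_zero G hG m
      omega
  exact (key n h).trans (Nat.sub_le _ _)

def solSet (k m : ℕ) (c : ℕ → ℕ) : Finset (Fin k → ℕ) :=
  (Fintype.piFinset fun _ => Finset.range (m+1)).filter fun f => ∑ j : Fin k, c (j : ℕ) * f j ≤ m

lemma mem_solSet {k m : ℕ} {c : ℕ → ℕ} {f : Fin k → ℕ} :
    f ∈ solSet k m c ↔ (∀ j, f j ≤ m) ∧ ∑ j : Fin k, c (j : ℕ) * f j ≤ m := by
  simp [solSet, Fintype.mem_piFinset, Nat.lt_succ_iff]

lemma solSet_card_le (c : ℕ → ℕ) :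
    ∀ k m, (∀ j, j < k → 1 ≤ c j) →
    (solSet k m c).card * k.factorial * ∏ j ∈ range k, c j ≤ (m + ∑ j ∈ range k, c j)^k := by
  intro k
  induction k with
  | zero =>
    intro m _
    have : (solSet 0 m c).card ≤ 1 := by
      rw [solSet]
      calc ((Fintype.piFinset fun _ : Fin 0 => Finset.range (m+1)).filter _).card
          ≤ (Fintype.piFinset fun _ : Fin 0 => Finset.range (m+1)).card :=
            Finset.card_filter_le _ _
        _ = 1 := by simp
    simpa using this
  | succ k ih =>
    intro m hc
    set S := ∑ j ∈ range k, c j with hS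
    clear_value S
    -- fiber decomposition
    have hmap : ∀ f ∈ solSet (k+1) m c, f (Fin.last k) ∈ range (m+1) := by
      intro f hf
      rw [Finset.mem_range, Nat.lt_succ_iff]
      exact (mem_solSet.mp hf).1 _
    have hcard := Finset.card_eq_sum_card_fiberwise hmap
    -- fiber bound
    have hfib : ∀ v, ((solSet (k+1) m c).filter fun f => f (Fin.last k) = v).card ≤
        (if c k * v ≤ m then (solSet k (m - c k * v) c).card else 0) := by
      intro v
      by_cases hv : c k * v ≤ m
      · rw [if_pos hv]
        apply Finset.card_le_card_of_injOn (fun f => Fin.init f)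
        · intro f hf
          obtain ⟨hf1, hlast⟩ := Finset.mem_filter.mp hf
          obtain ⟨hpi, hsum⟩ := mem_solSet.mp hf1
          rw [Fin.sum_univ_castSucc] at hsum
          have hsum2 : ∑ j : Fin k, c (j : ℕ) * Fin.init f j + c k * v ≤ m := by
            rw [hlast] at hsum
            show (∑ j : Fin k, c (j : ℕ) * f j.castSucc) + c k * v ≤ m
            simpa [Fin.coe_castSucc, Fin.val_last] using hsum
          have hsum3 : ∑ j : Fin k, c (j : ℕ) * Fin.init f j ≤ m - c k * v := Nat.le_sub_of_add_le hsum2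
          rw [Finset.mem_coe, mem_solSet]
          refine ⟨fun j => ?_, hsum3⟩
          have h1 : c (j : ℕ) * Fin.init f j ≤ m - c k * v :=
            le_trans (Finset.single_le_sum (f := fun j : Fin k => c (j:ℕ) * Fin.init f j)
              (fun _ _ => Nat.zero_le _) (Finset.mem_univ j)) hsum3
          have h2 : 1 ≤ c (j : ℕ) := hc (j : ℕ) (Nat.lt_succ_of_lt j.isLt)
          nlinarith
        · intro f hf g hg hfg
          obtain ⟨_, hfl⟩ := Finset.mem_filter.mp hf
          obtain ⟨_, hgl⟩ := Finset.mem_filter.mp hg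
          funext i
          refine Fin.lastCases ?_ ?_ i
          · rw [hfl, hgl]
          · intro j
            exact congrFun hfg j
      · rw [if_neg hv, Nat.le_zero, Finset.card_eq_zero, Finset.eq_empty_iff_forall_notMem]
        intro f hf
        obtain ⟨hf1, hlast⟩ := Finset.mem_filter.mp hf
        obtain ⟨_, hsum⟩ := mem_solSet.mp hf1
        apply hv
        calc c k * v = c ((Fin.last k : Fin (k+1)) : ℕ) * f (Fin.last k) := by rw [hlast]; rfl
          _ ≤ ∑ j : Fin (k+1), c (j : ℕ) * f j :=
              Finset.single_le_sum (f := fun j : Fin (k+1) => c (j:ℕ) * f j)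
                (fun _ _ => Nat.zero_le _) (Finset.mem_univ _)
          _ ≤ m := hsum
    -- combine
    rw [Finset.prod_range_succ, Finset.sum_range_succ]
    set ck := c k with hck
    set P := ∏ j ∈ range k, c j with hP
    set G : ℕ → ℕ := fun v => (m + S + ck - ck * v)^(k+1) with hG
    have hGanti : ∀ v, G (v+1) ≤ G v := by
      intro v
      apply Nat.pow_le_pow_left
      apply Nat.sub_le_sub_left
      exact Nat.mul_le_mul_left _ (Nat.le_succ v)
    set term : ℕ → ℕ := fun v => if ck * v ≤ m then (k+1) * ck * ((m - ck * v + S)^k) else 0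
      with hterm
    clear_value ck P G term
    have hterm_le : ∀ v, v < m + 1 → term v ≤ G v - G (v+1) := by
      intro v _
      clear hcard hmap hfib
      by_cases hv : ck * v ≤ m
      · simp only [hterm, if_pos hv]
        set t := m - ck * v + S with ht
        have e1 : m + S + ck - ck * v = t + ck := by omega
        have e2 : m + S + ck - ck * (v+1) = t := by
          have : ck * (v+1) = ck * v + ck := by ring
          omega
        have := pow_add_mul_le t ck k
        simp only [hG, e1, e2]
        clear hterm hG ht
        omega
      · simp only [hterm, if_neg hv]
        exact Nat.zero_le _
    calc (solSet (k+1) m c).card * (k+1).factorial * (P * ck)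
        = ∑ v ∈ range (m+1),
            ((solSet (k+1) m c).filter fun f => f (Fin.last k) = v).card
              * (k+1).factorial * (P * ck) := by
          rw [hcard, Finset.sum_mul, Finset.sum_mul]
      _ ≤ ∑ v ∈ range (m+1), term v := by
          apply Finset.sum_le_sum
          intro v _
          by_cases hv : ck * v ≤ m
          · have h1 := hfib v
            rw [if_pos hv] at h1
            have h2 := ih (m - ck * v) (fun j hj => hc j (Nat.lt_succ_of_lt hj))
            simp only [hterm, if_pos hv]
            calc ((solSet (k+1) m c).filter fun f => f (Fin.last k) = v).card
                  * (k+1).factorial * (P * ck)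
                ≤ (solSet k (m - ck * v) c).card * (k+1).factorial * (P * ck) := by
                  exact Nat.mul_le_mul_right _ (Nat.mul_le_mul_right _ h1)
              _ = ((solSet k (m - ck * v) c).card * k.factorial * P) * ((k+1) * ck) := by
                  rw [Nat.factorial_succ]; ring
              _ ≤ (m - ck * v + S)^k * ((k+1) * ck) := Nat.mul_le_mul_right _ h2
              _ = (k+1) * ck * ((m - ck * v + S)^k) := by ring
          · have h1 := hfib v
            rw [if_neg hv] at h1
            simp only [hterm, if_neg hv]
            rw [Nat.le_zero.mp h1]
            simp
      _ ≤ G 0 := sum_term_le G hGanti term (m+1) hterm_le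
      _ = (m + (S + ck))^(k+1) := by rw [hG]; simp [Nat.add_assoc]
      _ = (m + (∑ x ∈ range k, c x + ck)) ^ (k + 1) := by rw [← hS]


def pl (n : ℕ) (P : n.Partition) : ℕ → ℕ := fun i => (Multiset.sort P.parts (· ≤ ·)).getD i 0

lemma pl_len (n : ℕ) (P : n.Partition) : (Multiset.sort P.parts (· ≤ ·)).length = Multiset.card P.parts :=
  Multiset.length_sort _

lemma pl_get (n : ℕ) (P : n.Partition) (i : ℕ) (h : i < (Multiset.sort P.parts (· ≤ ·)).length) :
    pl n P i = (Multiset.sort P.parts (· ≤ ·)).get ⟨i, h⟩ :=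
  List.getD_eq_getElem _ _ h

lemma pl_mono (n r : ℕ) (P : n.Partition) (hP : Multiset.card P.parts = r) :
    ∀ i j, i ≤ j → j < r → pl n P i ≤ pl n P j := by
  intro i j hij hj
  have hlen : (Multiset.sort P.parts (· ≤ ·)).length = r := by rw [pl_len, hP]
  have hi : i < (Multiset.sort P.parts (· ≤ ·)).length := by omega
  have hj' : j < (Multiset.sort P.parts (· ≤ ·)).length := by omega
  rw [pl_get n P i hi, pl_get n P j hj']
  exact List.Pairwise.rel_get_of_le (Multiset.pairwise_sort _ _) (by exact hij)

lemma pl_pos (n r : ℕ) (P : n.Partition) (hP : Multiset.card P.parts = r) :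
    ∀ i, i < r → 1 ≤ pl n P i := by
  intro i hi
  have hlen : (Multiset.sort P.parts (· ≤ ·)).length = r := by rw [pl_len, hP]
  have hi' : i < (Multiset.sort P.parts (· ≤ ·)).length := by omega
  rw [pl_get n P i hi']
  apply P.parts_pos
  rw [← Multiset.mem_sort (r := (· ≤ ·))]
  apply List.get_mem

lemma pl_sum (n r : ℕ) (P : n.Partition) (hP : Multiset.card P.parts = r) :
    ∑ i ∈ range r, pl n P i = n := by
  have hlen : (Multiset.sort P.parts (· ≤ ·)).length = r := by rw [pl_len, hP]
  have h1 : (Multiset.sort P.parts (· ≤ ·)).sum = n := by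
    have := Multiset.sort_eq (r := (· ≤ ·)) P.parts
    calc (Multiset.sort P.parts (· ≤ ·)).sum
        = (↑(Multiset.sort P.parts (· ≤ ·)) : Multiset ℕ).sum := by rw [Multiset.sum_coe]
      _ = P.parts.sum := by rw [this]
      _ = n := P.parts_sum
  have h2 : ∑ i ∈ range r, pl n P i = (Multiset.sort P.parts (· ≤ ·)).sum := by
    conv_rhs => rw [← List.ofFn_get (Multiset.sort P.parts (· ≤ ·))]
    rw [List.sum_ofFn]
    rw [← Fin.sum_univ_eq_sum_range (fun i => pl n P i) r]
    rw [show r = (Multiset.sort P.parts (· ≤ ·)).length from hlen.symm]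
    apply Finset.sum_congr rfl
    intro j _
    exact pl_get n P j j.isLt
  rw [h2, h1]

def FF (n : ℕ) (P : n.Partition) : ℕ → ℕ :=
  fun j => if j = 0 then pl n P 0 - 1 else pl n P j - pl n P (j-1)

lemma FF_invariant (n r : ℕ) (hr : 1 ≤ r) (P : n.Partition) (hP : Multiset.card P.parts = r) :
    ∀ i, 1 ≤ i → i ≤ r - 1 →
      (∑ j ∈ range i, (r - j) * FF n P j) + r
        = (∑ t ∈ range i, pl n P t) + (r - i) * pl n P (i-1) := by
  intro i h1
  induction i, h1 using Nat.le_induction with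
  | base =>
    intro h1
    have hpos : 1 ≤ pl n P 0 := pl_pos n r P hP 0 (by omega)
    obtain ⟨y, hy⟩ : ∃ y, pl n P 0 = y + 1 := ⟨pl n P 0 - 1, by omega⟩
    obtain ⟨s, hs⟩ : ∃ s, r = 1 + s := ⟨r - 1, by omega⟩
    simp only [Finset.sum_range_one, FF, if_pos rfl, Nat.sub_zero, hy, Nat.add_sub_cancel]
    rw [hs]
    have : 1 + s - 1 = s := by omega
    rw [this]
    simp
    ring
  | succ i hi ih =>
    intro hir
    have hE := ih (by omega)
    rw [Finset.sum_range_succ, Finset.sum_range_succ (fun t => pl n P t)]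
    have hFFi : FF n P i = pl n P i - pl n P (i-1) := by
      rw [FF, if_neg (by omega)]
    have hmono : pl n P (i-1) ≤ pl n P i := pl_mono n r P hP (i-1) i (by omega) (by omega)
    obtain ⟨d, hd⟩ : ∃ d, pl n P i = pl n P (i-1) + d := ⟨_, (Nat.add_sub_cancel' hmono).symm⟩
    have hFFd : FF n P i = d := by rw [hFFi, hd]; omega
    obtain ⟨w, hw⟩ : ∃ w, r - i = w + 1 := ⟨r - i - 1, by omega⟩
    have hw2 : r - (i + 1) = w := by omega
    have hsucc : i + 1 - 1 = i := by omega
    rw [hFFd, hw, hw2, hsucc, hd]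
    calc (∑ j ∈ range i, (r - j) * FF n P j) + (w+1) * d + r
        = ((∑ j ∈ range i, (r - j) * FF n P j) + r) + (w+1) * d := by ring
      _ = ((∑ t ∈ range i, pl n P t) + (w+1) * pl n P (i-1)) + (w+1) * d := by rw [hE, hw]
      _ = (∑ t ∈ range i, pl n P t) + (pl n P (i-1) + d) + w * (pl n P (i-1) + d) := by ring

lemma FF_mem (n r : ℕ) (hr : 1 ≤ r) (P : n.Partition) (hP : Multiset.card P.parts = r) :
    (fun j : Fin (r-1) => FF n P (j : ℕ)) ∈ solSet (r-1) (n-r) (fun j => r - j) := by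
  have hb : ∑ j : Fin (r-1), (r - (j:ℕ)) * FF n P (j:ℕ) ≤ n - r := by
    rw [Fin.sum_univ_eq_sum_range (fun j => (r - j) * FF n P j) (r-1)]
    rcases Nat.lt_or_ge r 2 with h2 | h2
    · have : r - 1 = 0 := by omega
      rw [this]
      simp
    · have hE := FF_invariant n r hr P hP (r-1) (by omega) (le_refl _)
      have hm : pl n P (r-1-1) ≤ pl n P (r-1) := pl_mono n r P hP _ _ (by omega) (by omega)
      have hsum : (∑ t ∈ range (r-1), pl n P t) + pl n P (r-1) = n := by
        have := pl_sum n r P hP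
        rw [show r = (r-1)+1 by omega, Finset.sum_range_succ] at this
        convert this using 3 <;> omega
      have h1 : r - (r-1) = 1 := by omega
      rw [h1, one_mul] at hE
      generalize hA : (∑ j ∈ range (r-1), (r - j) * FF n P j) = Sf at hE ⊢
      generalize hB : (∑ t ∈ range (r-1), pl n P t) = Sp at hE hsum
      omega
  rw [mem_solSet]
  refine ⟨fun j => ?_, hb⟩
  have h1 : (r - (j:ℕ)) * FF n P (j:ℕ) ≤ n - r :=
    le_trans (Finset.single_le_sum (f := fun j : Fin (r-1) => (r - (j:ℕ)) * FF n P (j:ℕ))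
      (fun _ _ => Nat.zero_le _) (Finset.mem_univ j)) hb
  have h2 : 1 ≤ r - (j:ℕ) := by have := j.isLt; omega
  calc FF n P (j:ℕ) ≤ (r - (j:ℕ)) * FF n P (j:ℕ) := Nat.le_mul_of_pos_left _ (by omega)
    _ ≤ n - r := h1

lemma FF_inj (n r : ℕ) (hr : 1 ≤ r) (P1 P2 : n.Partition)
    (hP1 : Multiset.card P1.parts = r) (hP2 : Multiset.card P2.parts = r)
    (h : ∀ j, j < r - 1 → FF n P1 j = FF n P2 j) : P1 = P2 := by
  have pre : ∀ i, i < r - 1 → pl n P1 i = pl n P2 i := by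
    intro i
    induction i with
    | zero =>
      intro h0
      have q1 := pl_pos n r P1 hP1 0 (by omega)
      have q2 := pl_pos n r P2 hP2 0 (by omega)
      have e1 : FF n P1 0 = pl n P1 0 - 1 := by rw [FF]; simp
      have e2 : FF n P2 0 = pl n P2 0 - 1 := by rw [FF]; simp
      have := h 0 h0
      omega
    | succ i ih =>
      intro hi
      have hpre := ih (by omega)
      have m1 : pl n P1 i ≤ pl n P1 (i+1) := pl_mono n r P1 hP1 i (i+1) (by omega) (by omega)
      have m2 : pl n P2 i ≤ pl n P2 (i+1) := pl_mono n r P2 hP2 i (i+1) (by omega) (by omega)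
      have e1 : FF n P1 (i+1) = pl n P1 (i+1) - pl n P1 i := by
        rw [FF, if_neg (by omega)]
        simp
      have e2 : FF n P2 (i+1) = pl n P2 (i+1) - pl n P2 i := by
        rw [FF, if_neg (by omega)]
        simp
      have := h (i+1) hi
      omega
  have key : ∀ i, i < r → pl n P1 i = pl n P2 i := by
    intro i hi
    rcases Nat.lt_or_ge i (r-1) with h1 | h1
    · exact pre i h1
    · have hi' : i = r - 1 := by omega
      subst hi'
      have hs1 : (∑ t ∈ range (r-1), pl n P1 t) + pl n P1 (r-1) = n := by
        have := pl_sum n r P1 hP1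
        rw [show r = (r-1)+1 by omega, Finset.sum_range_succ] at this
        convert this using 3 <;> omega
      have hs2 : (∑ t ∈ range (r-1), pl n P2 t) + pl n P2 (r-1) = n := by
        have := pl_sum n r P2 hP2
        rw [show r = (r-1)+1 by omega, Finset.sum_range_succ] at this
        convert this using 3 <;> omega
      have heq : (∑ t ∈ range (r-1), pl n P1 t) = ∑ t ∈ range (r-1), pl n P2 t :=
        Finset.sum_congr rfl (fun t ht => pre t (Finset.mem_range.mp ht))
      generalize hB : (∑ t ∈ range (r-1), pl n P1 t) = Sp at hs1 heq
      generalize hC : (∑ t ∈ range (r-1), pl n P2 t) = Sq at hs2 heq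
      omega
  have hlen1 : (Multiset.sort P1.parts (· ≤ ·)).length = r := by rw [pl_len, hP1]
  have hlen2 : (Multiset.sort P2.parts (· ≤ ·)).length = r := by rw [pl_len, hP2]
  have hl : Multiset.sort P1.parts (· ≤ ·) = Multiset.sort P2.parts (· ≤ ·) := by
    apply List.ext_get (by rw [hlen1, hlen2])
    intro i h1 h2
    rw [← pl_get n P1 i h1, ← pl_get n P2 i h2]
    exact key i (by omega)
  apply Nat.Partition.ext
  rw [← Multiset.sort_eq (r := (· ≤ ·)) P1.parts, ← Multiset.sort_eq (r := (· ≤ ·)) P2.parts, hl]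

lemma partitionCount_le (n r : ℕ) (hr : 1 ≤ r) :
    partitionCount n r ≤ (solSet (r-1) (n-r) (fun j => r - j)).card := by
  classical
  rw [partitionCount, Nat.card_eq_fintype_card]
  rw [← Fintype.card_coe (solSet (r-1) (n-r) (fun j => r - j))]
  apply Fintype.card_le_of_injective
    (fun P => (⟨fun j : Fin (r-1) => FF n P.1 (j : ℕ), FF_mem n r hr P.1 P.2⟩ :
      {f // f ∈ solSet (r-1) (n-r) (fun j => r - j)}))
  intro P1 P2 hP12
  apply Subtype.ext
  apply FF_inj n r hr P1.1 P2.1 P1.2 P2.2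
  intro j hj
  have h2 := congrArg Subtype.val hP12
  exact congrFun h2 ⟨j, hj⟩

lemma prod_range_add_two : ∀ k, ∏ j ∈ range k, (j+2) = (k+1).factorial := by
  intro k
  induction k with
  | zero => simp
  | succ k ih => rw [Finset.prod_range_succ, ih, Nat.factorial_succ (k+1)]; ring

lemma prod_coeffs (r : ℕ) (hr : 1 ≤ r) : ∏ j ∈ range (r-1), (r - j) = r.factorial := by
  rw [← Finset.prod_range_reflect (fun j => r - j) (r-1)]
  have h : ∀ j ∈ range (r-1), r - (r - 1 - 1 - j) = j + 2 := by
    intro j hj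
    rw [Finset.mem_range] at hj
    omega
  rw [Finset.prod_congr rfl h, prod_range_add_two]
  congr 1
  omega

lemma key_nat (n r : ℕ) (hr : 1 ≤ r) :
    partitionCount n r * ((r-1).factorial * r.factorial) ≤ (n + r*r)^(r-1) := by
  have h1 := partitionCount_le n r hr
  have h2 := solSet_card_le (fun j => r - j) (r-1) (n-r) (fun j hj => by show 1 ≤ r - j; omega)
  rw [prod_coeffs r hr] at h2
  have h3 : partitionCount n r * (r-1).factorial * r.factorial
      ≤ (n - r + ∑ j ∈ range (r-1), (r-j))^(r-1) :=
    le_trans (Nat.mul_le_mul_right _ (Nat.mul_le_mul_right _ h1)) h2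
  have h4 : ∑ j ∈ range (r-1), (r - j) ≤ (r-1) * r := by
    calc ∑ j ∈ range (r-1), (r - j) ≤ ∑ _j ∈ range (r-1), r :=
          Finset.sum_le_sum (fun j _ => Nat.sub_le _ _)
      _ = (r-1) * r := by rw [Finset.sum_const, smul_eq_mul, card_range]
  have h5 : n - r + ∑ j ∈ range (r-1), (r - j) ≤ n + r*r := by
    have h6 : (r-1) * r ≤ r * r := Nat.mul_le_mul_right _ (Nat.sub_le _ _)
    generalize hS : (∑ j ∈ range (r-1), (r - j)) = S at h4
    omega
  calc partitionCount n r * ((r-1).factorial * r.factorial)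
      = partitionCount n r * (r-1).factorial * r.factorial := by ring
    _ ≤ (n - r + ∑ j ∈ range (r-1), (r-j))^(r-1) := h3
    _ ≤ (n + r*r)^(r-1) := Nat.pow_le_pow_left h5 _

theorem stmt8 (c : ℝ) (hc : 0 < c) :
    ∃ A : ℝ, 0 < A ∧ ∀ n : ℕ, 0 < n → ∀ r : ℕ, 1 ≤ r →
      (r : ℝ) ≤ (c * n) ^ ((1 : ℝ) / 3) →
        (partitionCount n r : ℝ) ≤
          A * (n : ℝ) ^ (r - 1) / ((r.factorial : ℝ) * ((r - 1).factorial : ℝ)) := by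
  refine ⟨Real.exp c, Real.exp_pos c, ?_⟩
  intro n hn r hr hrc
  have hn0 : (0:ℝ) < n := by exact_mod_cast hn
  have hr0 : (1:ℝ) ≤ r := by exact_mod_cast hr
  have hfac : (0:ℝ) < (r.factorial : ℝ) * ((r-1).factorial : ℝ) := by
    have := Nat.factorial_pos r
    have := Nat.factorial_pos (r-1)
    positivity
  rw [div_eq_mul_inv, ← ge_iff_le, ← div_eq_mul_inv, ge_iff_le, le_div_iff₀ hfac]
  have keyR : (partitionCount n r : ℝ) * ((r.factorial:ℝ) * ((r-1).factorial:ℝ))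
      ≤ ((n:ℝ) + (r:ℝ)*(r:ℝ))^(r-1) := by
    calc (partitionCount n r : ℝ) * ((r.factorial:ℝ) * ((r-1).factorial:ℝ))
        = ((partitionCount n r * ((r-1).factorial * r.factorial) : ℕ) : ℝ) := by
          push_cast; ring
      _ ≤ (((n + r*r)^(r-1) : ℕ) : ℝ) := by exact_mod_cast key_nat n r hr
      _ = ((n:ℝ) + (r:ℝ)*(r:ℝ))^(r-1) := by push_cast; ring
  refine keyR.trans ?_
  -- analytic step
  have hcn : (0:ℝ) ≤ c * n := by positivity
  have hr3 : (r:ℝ)^(3:ℕ) ≤ c * n := by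
    calc (r:ℝ)^(3:ℕ) ≤ ((c*n)^((1:ℝ)/3))^(3:ℕ) := by
          exact pow_le_pow_left₀ (by positivity) hrc 3
      _ = c * n := by
          rw [← Real.rpow_natCast ((c*n)^((1:ℝ)/3)) 3, ← Real.rpow_mul hcn]
          norm_num
  set x := (r:ℝ)*(r:ℝ)/(n:ℝ) with hxdef
  have hx : (0:ℝ) ≤ x := by positivity
  have hsplit : (n:ℝ) + (r:ℝ)*(r:ℝ) = (n:ℝ) * (1 + x) := by
    rw [hxdef]
    field_simp
  rw [hsplit, mul_pow]
  have h1x : (1 + x)^(r-1) ≤ Real.exp x ^ (r-1) := by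
    apply pow_le_pow_left₀ (by positivity)
    have := Real.add_one_le_exp x
    linarith
  have hexp : Real.exp x ^ (r-1) = Real.exp (((r-1 : ℕ):ℝ) * x) := (Real.exp_nat_mul x (r-1)).symm
  have hcast : ((r-1 : ℕ):ℝ) = (r:ℝ) - 1 := by
    push_cast [hr]
    ring
  have hle : ((r-1 : ℕ):ℝ) * x ≤ c := by
    rw [hcast, hxdef]
    rw [show ((r:ℝ)-1) * ((r:ℝ)*(r:ℝ)/(n:ℝ)) = (((r:ℝ)-1) * ((r:ℝ)*(r:ℝ)))/(n:ℝ) from by ring,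
      div_le_iff₀ hn0]
    nlinarith [hr3, hr0, hn0, sq_nonneg (r:ℝ)]
  calc (n:ℝ)^(r-1) * (1+x)^(r-1) ≤ (n:ℝ)^(r-1) * Real.exp x ^ (r-1) := by
        apply mul_le_mul_of_nonneg_left h1x (by positivity)
    _ = (n:ℝ)^(r-1) * Real.exp (((r-1:ℕ):ℝ) * x) := by rw [hexp]
    _ ≤ (n:ℝ)^(r-1) * Real.exp c := by
        apply mul_le_mul_of_nonneg_left (Real.exp_le_exp.mpr hle) (by positivity)
    _ = Real.exp c * (n:ℝ)^(r-1) := by ring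
end

section
/- The swap map σ is an involution on the set of Wilf partitions of n: for every Wilf partition P of n, applying the swap twice returns P, i.e., σ(σ(P)) = P. -/
/-- Swapping parts and multiplicities: for each distinct element `p` of `s`, include
`p` copies of the multiplicity of `p` in `s`. -/
def swapMultiset (s : Multiset ℕ) : Multiset ℕ :=
  s.dedup.bind fun p => Multiset.replicate p (Multiset.count p s)

lemma count_swap (s : Multiset ℕ) (a : ℕ) :
    Multiset.count a (swapMultiset s) =
      ∑ q ∈ s.toFinset, if a = Multiset.count q s then q else 0 := by
  rw [swapMultiset, Multiset.count_bind]
  rw [show (Finset.sum s.toFinset fun q => if a = Multiset.count q s then q else 0) =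
      (s.toFinset.val.map fun q => if a = Multiset.count q s then q else 0).sum from rfl]
  rw [Multiset.toFinset_val]
  congr 1
  apply Multiset.map_congr rfl
  intro q _
  rw [Multiset.count_replicate]
  exact if_congr eq_comm rfl rfl

lemma mem_swap {s : Multiset ℕ} (h0 : 0 ∉ s) (a : ℕ) :
    a ∈ swapMultiset s ↔ ∃ p ∈ s, a = Multiset.count p s := by
  simp only [swapMultiset, Multiset.mem_bind, Multiset.mem_dedup, Multiset.mem_replicate]
  constructor
  · rintro ⟨p, hp, -, rfl⟩; exact ⟨p, hp, rfl⟩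
  · rintro ⟨p, hp, rfl⟩
    refine ⟨p, hp, fun hp0 => h0 (hp0 ▸ hp), rfl⟩

theorem stmt11 (n : ℕ) (hn : 0 < n) (P : n.Partition) (hP : IsWilf P) :
    swapMultiset (swapMultiset P.parts) = P.parts := by
  set s := P.parts with hs
  have h0 : (0 : ℕ) ∉ s := fun h => (P.parts_pos h).false
  have hinj : ∀ p ∈ s.toFinset, ∀ q ∈ s.toFinset,
      Multiset.count p s = Multiset.count q s → p = q := by
    intro p hp q hq h
    exact hP p (Multiset.mem_toFinset.mp hp) q (Multiset.mem_toFinset.mp hq) h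
  -- toFinset of swap
  have htf : (swapMultiset s).toFinset = s.toFinset.image (fun p => Multiset.count p s) := by
    ext m
    simp only [Multiset.mem_toFinset, Finset.mem_image, mem_swap h0]
    constructor
    · rintro ⟨p, hp, rfl⟩; exact ⟨p, hp, rfl⟩
    · rintro ⟨p, hp, rfl⟩; exact ⟨p, hp, rfl⟩
  -- count of a multiplicity in swap s
  have hcount : ∀ p ∈ s.toFinset,
      Multiset.count (Multiset.count p s) (swapMultiset s) = p := by
    intro p hp
    rw [count_swap]
    rw [Finset.sum_eq_single_of_mem p hp]
    · simp
    · intro q hq hqp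
      have : Multiset.count p s ≠ Multiset.count q s := fun h =>
        hqp (hinj q hq p hp h.symm)
      simp [this]
  ext a
  rw [count_swap, htf, Finset.sum_image (fun p hp q hq h => hinj p hp q hq h)]
  have : ∀ p ∈ s.toFinset,
      (if a = Multiset.count (Multiset.count p s) (swapMultiset s) then Multiset.count p s else 0)
        = (if a = p then Multiset.count p s else 0) := by
    intro p hp
    rw [hcount p hp]
  rw [Finset.sum_congr rfl this]
  by_cases ha : a ∈ s.toFinset
  · rw [Finset.sum_eq_single_of_mem a ha]
    · simp
    · intro q hq hqa
      have hne : a ≠ q := fun h => hqa h.symm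
      simp [hne]
  · rw [Finset.sum_eq_zero, Multiset.count_eq_zero.mpr (fun h => ha (Multiset.mem_toFinset.mpr h))]
    intro q hq
    have : a ≠ q := fun h => ha (h ▸ hq)
    simp [this]
end

section
/- Let 0 < ε < 1/2 and set a = (6(1 − 2ε))^{1/3}. There exists an integer K₀ such that for every integer K ≥ K₀ there exists N such that for all integers n ≥ N the following holds: with b = ⌊a·n^{1/3}/K⌋ and I_j = {(j−1)b+1, (j−1)b+2, …, jb} for j = 1, …, K, every bijection p of {1, 2, …, Kb} onto itself satisfying p(I_j) ⊆ I_{K+1−j} for all j ∈ {1, …, K} satisfies ∑_{i=1}^{Kb} i·p(i) < (1 − ε)·n. -/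
lemma gauss_real (K : ℕ) : ∑ j ∈ Finset.Icc 1 K, (j:ℝ) = K*(K+1)/2 := by
  induction K with
  | zero => simp
  | succ K ih =>
    rw [Finset.sum_Icc_succ_top (by omega), ih]
    push_cast; ring

lemma sumid_real (K : ℕ) :
    ∑ j ∈ Finset.Icc 1 K, (j:ℝ)*((K:ℝ)+1-(j:ℝ)) = K*(K+1)*(K+2)/6 := by
  induction K with
  | zero => simp
  | succ K ih =>
    push_cast
    calc ∑ j ∈ Finset.Icc 1 (K+1), (j:ℝ)*((K:ℝ)+1+1-(j:ℝ))
        = ∑ j ∈ Finset.Icc 1 (K+1), ((j:ℝ)*((K:ℝ)+1-(j:ℝ)) + (j:ℝ)) :=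
          Finset.sum_congr rfl (fun j _ => by ring)
      _ = (∑ j ∈ Finset.Icc 1 (K+1), (j:ℝ)*((K:ℝ)+1-(j:ℝ)))
            + ∑ j ∈ Finset.Icc 1 (K+1), (j:ℝ) := Finset.sum_add_distrib
      _ = ((∑ j ∈ Finset.Icc 1 K, (j:ℝ)*((K:ℝ)+1-(j:ℝ)))
            + ((K:ℝ)+1)*((K:ℝ)+1-((K:ℝ)+1))) + (K+1)*(K+1+1)/2 := by
          rw [Finset.sum_Icc_succ_top (by omega), gauss_real]; push_cast; ring
      _ = (K:ℝ)*(K+1)*(K+2)/6 + ((K:ℝ)+1)*((K:ℝ)+2)/2 := by rw [ih]; ring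
      _ = ((K:ℝ)+1)*((K:ℝ)+1+1)*((K:ℝ)+1+2)/6 := by ring

lemma decomp (K b : ℕ) :
    Finset.Icc 1 (K*b) = (Finset.Icc 1 K).biUnion (fun j => Finset.Icc ((j-1)*b+1) (j*b)) := by
  ext i
  simp only [Finset.mem_Icc, Finset.mem_biUnion]
  constructor
  · rintro ⟨h1, h2⟩
    rcases Nat.eq_zero_or_pos b with hb | hb
    · rw [hb, Nat.mul_zero] at h2; omega
    obtain ⟨q, r, hq1, hq2⟩ : ∃ q r, b * q + r = i - 1 ∧ r < b :=
      ⟨(i-1)/b, (i-1)%b, Nat.div_add_mod _ _, Nat.mod_lt _ hb⟩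
    have hqK : q < K := by
      have hcomm : K * b = b * K := Nat.mul_comm K b
      have : b * q < b * K := by omega
      exact Nat.lt_of_mul_lt_mul_left this
    refine ⟨q + 1, ⟨by omega, by omega⟩, ?_, ?_⟩
    · have h5 : (q + 1 - 1) * b = b * q := by
        have : q + 1 - 1 = q := by omega
        rw [this, Nat.mul_comm]
      rw [h5]; omega
    · have h5 : (q + 1) * b = b * q + b := by
        rw [Nat.add_mul, Nat.one_mul, Nat.mul_comm]
      rw [h5]; omega
  · rintro ⟨j, ⟨hj1, hjK⟩, hi1, hi2⟩
    have : j * b ≤ K * b := Nat.mul_le_mul_right b hjK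
    omega

lemma blockdisj (K b : ℕ) : ((Finset.Icc 1 K : Finset ℕ) : Set ℕ).PairwiseDisjoint
    (fun j => Finset.Icc ((j-1)*b+1) (j*b)) := by
  intro j hj j' hj' hne
  simp only [Finset.coe_Icc, Set.mem_Icc] at hj hj'
  apply Finset.disjoint_left.2
  intro i hi hi'
  simp only [Finset.mem_Icc] at hi hi'
  rcases lt_or_gt_of_ne hne with h | h
  · have : j * b ≤ (j'-1) * b := Nat.mul_le_mul_right b (by omega)
    omega
  · have : j' * b ≤ (j-1) * b := Nat.mul_le_mul_right b (by omega)
    omega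

theorem stmt13 (ε : ℝ) (hε0 : 0 < ε) (hε2 : ε < 1 / 2)
    (a : ℝ) (ha : a = (6 * (1 - 2 * ε)) ^ ((1 : ℝ) / 3)) :
    ∃ K₀ : ℕ, ∀ K : ℕ, K₀ ≤ K → ∃ N : ℕ, ∀ n : ℕ, N ≤ n →
      ∀ b : ℕ, b = ⌊a * (n : ℝ) ^ ((1 : ℝ) / 3) / K⌋₊ →
        ∀ p : ℕ → ℕ,
          Set.BijOn p (Set.Icc 1 (K * b)) (Set.Icc 1 (K * b)) →
          (∀ j, 1 ≤ j → j ≤ K →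
            ∀ i ∈ Finset.Icc ((j - 1) * b + 1) (j * b),
              p i ∈ Finset.Icc ((K + 1 - j - 1) * b + 1) ((K + 1 - j) * b)) →
          (∑ i ∈ Finset.Icc 1 (K * b), (i : ℝ) * (p i : ℝ)) < (1 - ε) * n := by
  have hpos : (0:ℝ) < 6 * (1 - 2*ε) := by linarith
  have ha0 : 0 ≤ a := ha ▸ Real.rpow_nonneg hpos.le _
  have ha3 : a ^ (3:ℕ) = 6 * (1 - 2*ε) := by
    rw [ha, ← Real.rpow_natCast ((6 * (1 - 2*ε)) ^ ((1:ℝ)/3)) 3, ← Real.rpow_mul hpos.le]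
    norm_num
  refine ⟨⌈6/ε⌉₊ + 1, fun K hK => ⟨1, fun n hn b hb p _hbij hp => ?_⟩⟩
  have hK0 : 0 < K := by omega
  have hKR : (0:ℝ) < K := by exact_mod_cast hK0
  have hKε : 6 / ε ≤ K := by
    have h1 : (6:ℝ)/ε ≤ (⌈6/ε⌉₊ : ℝ) := Nat.le_ceil _
    have h2 : ((⌈6/ε⌉₊ : ℕ) : ℝ) ≤ K := by exact_mod_cast (by omega : ⌈6/ε⌉₊ ≤ K)
    linarith
  have h6 : 6 ≤ ε * K := by
    rw [div_le_iff₀ hε0] at hKε; linarith [mul_comm ε (K:ℝ)]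
  have hK12 : (12:ℝ) ≤ K := by
    have : (12:ℝ) ≤ 6/ε := by
      rw [le_div_iff₀ hε0]; linarith
    linarith
  have hnR : (1:ℝ) ≤ n := by exact_mod_cast hn
  -- b ≤ a n^{1/3} / K
  have hx0 : 0 ≤ a * (n:ℝ)^((1:ℝ)/3) / K :=
    div_nonneg (mul_nonneg ha0 (Real.rpow_nonneg (Nat.cast_nonneg n) _)) hKR.le
  have hble : (b:ℝ) ≤ a * (n:ℝ)^((1:ℝ)/3) / K := hb ▸ Nat.floor_le hx0
  -- split sum into blocks
  have hsum : (∑ i ∈ Finset.Icc 1 (K*b), (i:ℝ)*(p i))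
      = ∑ j ∈ Finset.Icc 1 K, ∑ i ∈ Finset.Icc ((j-1)*b+1) (j*b), (i:ℝ)*(p i) := by
    rw [decomp K b, Finset.sum_biUnion (blockdisj K b)]
  -- per-block bound
  have hblock : ∀ j ∈ Finset.Icc 1 K,
      (∑ i ∈ Finset.Icc ((j-1)*b+1) (j*b), (i:ℝ)*(p i))
        ≤ (b:ℝ)^3 * ((j:ℝ)*((K:ℝ)+1-(j:ℝ))) := by
    intro j hj
    have hj' := Finset.mem_Icc.1 hj
    have hcast : (((K+1-j)*b : ℕ):ℝ) = ((K:ℝ)+1-(j:ℝ))*(b:ℝ) := by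
      rw [Nat.cast_mul, Nat.cast_sub (by omega : j ≤ K+1)]
      push_cast; ring
    have hterm : ∀ i ∈ Finset.Icc ((j-1)*b+1) (j*b),
        (i:ℝ)*(p i) ≤ ((j:ℝ)*(b:ℝ)) * (((K:ℝ)+1-(j:ℝ))*(b:ℝ)) := by
      intro i hi
      have hi' := Finset.mem_Icc.1 hi
      have hpi' := (Finset.mem_Icc.1 (hp j hj'.1 hj'.2 i hi)).2
      have h1 : (i:ℝ) ≤ (j:ℝ)*(b:ℝ) := by exact_mod_cast hi'.2
      have h2 : ((p i : ℕ):ℝ) ≤ ((K:ℝ)+1-(j:ℝ))*(b:ℝ) := by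
        rw [← hcast]; exact_mod_cast hpi'
      have h3 : (0:ℝ) ≤ (j:ℝ)*(b:ℝ) := by positivity
      exact mul_le_mul h1 h2 (Nat.cast_nonneg _) h3
    have hcard : (Finset.Icc ((j-1)*b+1) (j*b)).card = b := by
      rw [Nat.card_Icc]
      have h : (j-1)*b + b = j*b := by
        have h1 : (j-1) + 1 = j := by omega
        calc (j-1)*b + b = ((j-1)+1)*b := by rw [Nat.add_mul, Nat.one_mul]
          _ = j*b := by rw [h1]
      omega
    calc (∑ i ∈ Finset.Icc ((j-1)*b+1) (j*b), (i:ℝ)*(p i))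
        ≤ (Finset.Icc ((j-1)*b+1) (j*b)).card
            • (((j:ℝ)*(b:ℝ)) * (((K:ℝ)+1-(j:ℝ))*(b:ℝ))) :=
          Finset.sum_le_card_nsmul _ _ _ hterm
      _ = (b:ℝ) * (((j:ℝ)*(b:ℝ)) * (((K:ℝ)+1-(j:ℝ))*(b:ℝ))) := by
          rw [hcard, nsmul_eq_mul]
      _ = (b:ℝ)^3 * ((j:ℝ)*((K:ℝ)+1-(j:ℝ))) := by ring
  -- total bound
  have htot : (∑ i ∈ Finset.Icc 1 (K*b), (i:ℝ)*(p i))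
      ≤ (b:ℝ)^3 * ((K:ℝ)*((K:ℝ)+1)*((K:ℝ)+2)/6) := by
    rw [hsum]
    calc (∑ j ∈ Finset.Icc 1 K, ∑ i ∈ Finset.Icc ((j-1)*b+1) (j*b), (i:ℝ)*(p i))
        ≤ ∑ j ∈ Finset.Icc 1 K, (b:ℝ)^3 * ((j:ℝ)*((K:ℝ)+1-(j:ℝ))) :=
          Finset.sum_le_sum hblock
      _ = (b:ℝ)^3 * ∑ j ∈ Finset.Icc 1 K, (j:ℝ)*((K:ℝ)+1-(j:ℝ)) :=
          (Finset.mul_sum _ _ _).symm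
      _ = (b:ℝ)^3 * ((K:ℝ)*((K:ℝ)+1)*((K:ℝ)+2)/6) := by rw [sumid_real]
  -- bound b^3
  have hn3 : ((n:ℝ)^((1:ℝ)/3))^(3:ℕ) = (n:ℝ) := by
    rw [← Real.rpow_natCast ((n:ℝ)^((1:ℝ)/3)) 3, ← Real.rpow_mul (Nat.cast_nonneg n)]
    norm_num
  have hb3 : (b:ℝ)^3 ≤ (6*(1-2*ε)) * n / (K:ℝ)^3 := by
    calc (b:ℝ)^3 ≤ (a * (n:ℝ)^((1:ℝ)/3) / K)^3 :=
          pow_le_pow_left₀ (Nat.cast_nonneg b) hble 3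
      _ = a^3 * ((n:ℝ)^((1:ℝ)/3))^3 / (K:ℝ)^3 := by rw [div_pow, mul_pow]
      _ = (6*(1-2*ε)) * n / (K:ℝ)^3 := by rw [ha3, hn3]
  have hT0 : (0:ℝ) ≤ (K:ℝ)*((K:ℝ)+1)*((K:ℝ)+2)/6 := by positivity
  have hstep : (b:ℝ)^3 * ((K:ℝ)*((K:ℝ)+1)*((K:ℝ)+2)/6)
      ≤ (1-2*ε) * n * (((K:ℝ)+1)*((K:ℝ)+2)) / (K:ℝ)^2 := by
    calc (b:ℝ)^3 * ((K:ℝ)*((K:ℝ)+1)*((K:ℝ)+2)/6)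
        ≤ ((6*(1-2*ε)) * n / (K:ℝ)^3) * ((K:ℝ)*((K:ℝ)+1)*((K:ℝ)+2)/6) :=
          mul_le_mul_of_nonneg_right hb3 hT0
      _ = (1-2*ε) * n * (((K:ℝ)+1)*((K:ℝ)+2)) / (K:ℝ)^2 := by
          field_simp
  have hlast : (1-2*ε) * n * (((K:ℝ)+1)*((K:ℝ)+2)) / (K:ℝ)^2 < (1-ε) * n := by
    rw [div_lt_iff₀ (by positivity)]
    have hkey : (1-2*ε) * (((K:ℝ)+1)*((K:ℝ)+2)) < (1-ε) * (K:ℝ)^2 := by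
      nlinarith [mul_nonneg (by linarith : (0:ℝ) ≤ ε*K - 6) hKR.le,
        mul_nonneg hε0.le hKR.le]
    nlinarith [mul_lt_mul_of_pos_left hkey (lt_of_lt_of_le one_pos hnR)]
  calc (∑ i ∈ Finset.Icc 1 (K*b), (i:ℝ)*(p i))
      ≤ (b:ℝ)^3 * ((K:ℝ)*((K:ℝ)+1)*((K:ℝ)+2)/6) := htot
    _ ≤ (1-2*ε) * n * (((K:ℝ)+1)*((K:ℝ)+2)) / (K:ℝ)^2 := hstep
    _ < (1-ε) * n := hlast
end

section
/- Let 0 < ε < 1/2 and set a = (6(1 − 2ε))^{1/3}. There exists an integer K₀ such that for every integer K ≥ K₀ there exists N such that for all integers n ≥ N, setting b = ⌊a·n^{1/3}/K⌋, the number of Wilf partitions of n satisfies f(n) ≥ (b!)^K. -/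
set_option linter.unusedSectionVars false


open Finset

namespace WilfAux

variable (b K n : ℕ)

def pt (x : Fin K × Fin b) : ℕ := x.1.val * b + x.2.val + 1

def mu (σ : Fin K → Equiv.Perm (Fin b)) (x : Fin K × Fin b) : ℕ :=
  (K - 1 - x.1.val) * b + (σ x.1 x.2).val + 2

def T (σ : Fin K → Equiv.Perm (Fin b)) : ℕ :=
  ∑ x : Fin K × Fin b, pt b K x * mu b K σ x

def M (σ : Fin K → Equiv.Perm (Fin b)) : Multiset ℕ :=
  (∑ x : Fin K × Fin b, Multiset.replicate (mu b K σ x) (pt b K x)) + {n - T b K σ}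

def Tmax : ℕ := ∑ k ∈ range K, b * ((k + 1) * b * ((K - k) * b + 1))

lemma decomp {b k k' j j' : ℕ} (hj : j < b) (hj' : j' < b)
    (h : k * b + j = k' * b + j') : k = k' ∧ j = j' := by
  have e : (k * b + j) % b = j := by
    rw [add_comm, Nat.add_mul_mod_self_right, Nat.mod_eq_of_lt hj]
  have e' : (k' * b + j') % b = j' := by
    rw [add_comm, Nat.add_mul_mod_self_right, Nat.mod_eq_of_lt hj']
  have h1 : j = j' := by
    have := congrArg (· % b) h
    simpa [e, e'] using this
  have h2 : k * b = k' * b := by omega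
  exact ⟨Nat.eq_of_mul_eq_mul_right (by omega) h2, h1⟩

lemma pt_inj {x y : Fin K × Fin b} (h : pt b K x = pt b K y) : x = y := by
  unfold pt at h
  obtain ⟨h1, h2⟩ := decomp x.2.isLt y.2.isLt
    (show x.1.val * b + x.2.val = y.1.val * b + y.2.val by omega)
  exact Prod.ext (Fin.ext h1) (Fin.ext h2)

lemma pt_le (x : Fin K × Fin b) : pt b K x ≤ K * b := by
  unfold pt
  have hx1 := x.1.isLt; have hx2 := x.2.isLt
  calc x.1.val * b + x.2.val + 1 ≤ x.1.val * b + b := by omega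
    _ = (x.1.val + 1) * b := by ring
    _ ≤ K * b := Nat.mul_le_mul_right _ (by omega)

lemma pt_pos (x : Fin K × Fin b) : 0 < pt b K x := by unfold pt; omega

lemma two_le_mu (σ : Fin K → Equiv.Perm (Fin b)) (x : Fin K × Fin b) :
    2 ≤ mu b K σ x := by unfold mu; omega

lemma mu_inj (σ : Fin K → Equiv.Perm (Fin b)) {x y : Fin K × Fin b}
    (h : mu b K σ x = mu b K σ y) : x = y := by
  unfold mu at h
  obtain ⟨h1, h2⟩ := decomp (σ x.1 x.2).isLt (σ y.1 y.2).isLt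
    (show (K - 1 - x.1.val) * b + (σ x.1 x.2).val
      = (K - 1 - y.1.val) * b + (σ y.1 y.2).val by omega)
  have hx1 := x.1.isLt; have hy1 := y.1.isLt
  have hk : x.1 = y.1 := Fin.ext (by omega)
  have hs : (σ x.1) x.2 = (σ y.1) y.2 := Fin.ext h2
  rw [← hk] at hs
  exact Prod.ext hk ((σ x.1).injective hs)

lemma T_le_Tmax (σ : Fin K → Equiv.Perm (Fin b)) : T b K σ ≤ Tmax b K := by
  unfold T Tmax
  rw [Fintype.sum_prod_type, ← Fin.sum_univ_eq_sum_range fun k => b * ((k + 1) * b * ((K - k) * b + 1))]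
  refine Finset.sum_le_sum fun k _ => ?_
  have : ∀ j : Fin b, pt b K (k, j) * mu b K σ (k, j) ≤ (k.val + 1) * b * ((K - k.val) * b + 1) := by
    intro j
    have h1 : pt b K (k, j) ≤ (k.val + 1) * b := by
      unfold pt; have := j.isLt; simp only; nlinarith
    have h2 : mu b K σ (k, j) ≤ (K - k.val) * b + 1 := by
      unfold mu
      have hs := (σ k j).isLt
      have hk := k.isLt
      have : (K - 1 - k.val) * b + b = (K - k.val) * b := by
        rw [← Nat.succ_mul]; congr 1; omega
      simp only; omega
    exact Nat.mul_le_mul h1 h2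
  calc ∑ j : Fin b, pt b K (k, j) * mu b K σ (k, j)
      ≤ ∑ _j : Fin b, (k.val + 1) * b * ((K - k.val) * b + 1) :=
        Finset.sum_le_sum fun j _ => this j
    _ = b * ((k.val + 1) * b * ((K - k.val) * b + 1)) := by
        rw [Finset.sum_const, Finset.card_univ, Fintype.card_fin, smul_eq_mul]

variable (hn : Tmax b K + K * b + 1 ≤ n)

include hn

lemma r_ge (σ : Fin K → Equiv.Perm (Fin b)) : K * b + 1 ≤ n - T b K σ := by
  have := T_le_Tmax b K σ; omega

lemma r_ne_pt (σ : Fin K → Equiv.Perm (Fin b)) (x : Fin K × Fin b) :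
    n - T b K σ ≠ pt b K x := by
  have h1 := r_ge b K n hn σ
  have h2 := pt_le b K x
  omega

lemma count_pt (σ : Fin K → Equiv.Perm (Fin b)) (x : Fin K × Fin b) :
    Multiset.count (pt b K x) (M b K n σ) = mu b K σ x := by
  unfold M
  rw [Multiset.count_add, Multiset.count_sum']
  rw [Finset.sum_eq_single x (fun y _ hy => by
    rw [Multiset.count_replicate]
    split
    · next hh => exact absurd (pt_inj b K (by omega)) hy
    · rfl) (by simp)]
  rw [Multiset.count_replicate, if_pos rfl, Multiset.count_singleton,
    if_neg (fun h => r_ne_pt b K n hn σ x h.symm), add_zero]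

lemma count_r (σ : Fin K → Equiv.Perm (Fin b)) :
    Multiset.count (n - T b K σ) (M b K n σ) = 1 := by
  unfold M
  rw [Multiset.count_add, Multiset.count_sum']
  rw [Finset.sum_eq_zero (fun y _ => by
    rw [Multiset.count_replicate]
    split
    · next hh => exact absurd (by omega) (r_ne_pt b K n hn σ y)
    · rfl),
    Multiset.count_singleton, if_pos rfl]

lemma mem_M (σ : Fin K → Equiv.Perm (Fin b)) {q : ℕ} (hq : q ∈ M b K n σ) :
    (∃ x, q = pt b K x) ∨ q = n - T b K σ := by
  unfold M at hq
  rw [Multiset.mem_add] at hq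
  rcases hq with hq | hq
  · rw [Multiset.mem_sum] at hq
    obtain ⟨x, _, hx⟩ := hq
    rw [Multiset.eq_of_mem_replicate hx]
    exact Or.inl ⟨x, rfl⟩
  · exact Or.inr (Multiset.mem_singleton.mp hq)

lemma M_sum (σ : Fin K → Equiv.Perm (Fin b)) : (M b K n σ).sum = n := by
  unfold M
  have hsum : (∑ x : Fin K × Fin b, Multiset.replicate (mu b K σ x) (pt b K x)).sum
      = ∑ x : Fin K × Fin b, (Multiset.replicate (mu b K σ x) (pt b K x)).sum := by
    simpa only [Multiset.coe_sumAddMonoidHom] using map_sum Multiset.sumAddMonoidHom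
      (fun x => Multiset.replicate (mu b K σ x) (pt b K x)) Finset.univ
  simp only [Multiset.sum_replicate, smul_eq_mul] at hsum
  rw [Multiset.sum_add, hsum]
  simp only [Multiset.sum_singleton]
  have : ∑ x : Fin K × Fin b, mu b K σ x * pt b K x = T b K σ := by
    unfold T; exact Finset.sum_congr rfl fun x _ => mul_comm _ _
  rw [this]
  have h1 := T_le_Tmax b K σ
  omega

def P (σ : Fin K → Equiv.Perm (Fin b)) : Nat.Partition n where
  parts := M b K n σ
  parts_pos := by
    intro i hi
    rcases mem_M b K n hn σ hi with ⟨x, rfl⟩ | rfl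
    · exact pt_pos b K x
    · have := r_ge b K n hn σ; omega
  parts_sum := M_sum b K n hn σ

lemma P_wilf (σ : Fin K → Equiv.Perm (Fin b)) : IsWilf (P b K n hn σ) := by
  intro p hp q hq hpq
  simp only [P] at hp hq hpq
  rcases mem_M b K n hn σ hp with ⟨x, rfl⟩ | rfl <;>
    rcases mem_M b K n hn σ hq with ⟨y, rfl⟩ | rfl
  · rw [count_pt b K n hn, count_pt b K n hn] at hpq
    rw [mu_inj b K σ hpq]
  · rw [count_pt b K n hn, count_r b K n hn] at hpq
    have := two_le_mu b K σ x; omega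
  · rw [count_r b K n hn, count_pt b K n hn] at hpq
    have := two_le_mu b K σ y; omega
  · rfl

lemma P_inj : Function.Injective (fun σ => P b K n hn σ) := by
  intro σ σ' h
  have hM : M b K n σ = M b K n σ' := congrArg Nat.Partition.parts h
  funext k
  ext j
  have hc : mu b K σ (k, j) = mu b K σ' (k, j) := by
    rw [← count_pt b K n hn σ (k, j), ← count_pt b K n hn σ' (k, j), hM]
  unfold mu at hc
  simp only at hc
  omega

lemma key_s14 : (Nat.factorial b) ^ K ≤ wilfCount n := by
  have hinj : Function.Injective
      (fun σ : Fin K → Equiv.Perm (Fin b) => (⟨P b K n hn σ, P_wilf b K n hn σ⟩ :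
        {P : Nat.Partition n // IsWilf P})) := by
    intro σ σ' h
    exact P_inj b K n hn (Subtype.ext_iff.mp h)
  have := Nat.card_le_card_of_injective _ hinj
  rw [Nat.card_pi] at this
  simp only [Nat.card_eq_fintype_card, Fintype.card_perm, Fintype.card_fin,
    Finset.prod_const, Finset.card_univ] at this
  exact this


end WilfAux

namespace WilfAux

lemma sum_kp1 (K : ℕ) : 2 * ∑ k ∈ range K, (k + 1) = K * (K + 1) := by
  induction K with
  | zero => simp
  | succ K ih => rw [Finset.sum_range_succ, Nat.mul_add, ih]; ring

lemma sum_tri (K : ℕ) : 6 * ∑ k ∈ range K, (k + 1) * (K - k) = K * (K + 1) * (K + 2) := by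
  induction K with
  | zero => simp
  | succ K ih =>
    have step : ∀ k ∈ range (K + 1), (k + 1) * (K + 1 - k) = (k + 1) * (K - k) + (k + 1) := by
      intro k hk
      rw [Finset.mem_range] at hk
      rw [show K + 1 - k = (K - k) + 1 by omega, Nat.mul_add, Nat.mul_one]
    rw [Finset.sum_congr rfl step, Finset.sum_add_distrib,
      Finset.sum_range_succ (fun k => (k + 1) * (K - k))]
    simp only [Nat.sub_self, Nat.mul_zero, Nat.add_zero]
    have h2 := sum_kp1 (K + 1)
    calc 6 * (∑ k ∈ range K, (k + 1) * (K - k) + ∑ k ∈ range (K + 1), (k + 1))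
        = 6 * ∑ k ∈ range K, (k + 1) * (K - k) + 3 * (2 * ∑ k ∈ range (K + 1), (k + 1)) := by
          ring
      _ = K * (K + 1) * (K + 2) + 3 * ((K + 1) * (K + 1 + 1)) := by rw [ih, h2]
      _ = (K + 1) * (K + 1 + 1) * (K + 1 + 2) := by ring

lemma Tmax_eq (b K : ℕ) :
    6 * Tmax b K = K * (K + 1) * (K + 2) * b ^ 3 + 3 * (K * (K + 1)) * b ^ 2 := by
  unfold Tmax
  have expand : ∀ k ∈ range K,
      b * ((k + 1) * b * ((K - k) * b + 1)) = (k + 1) * (K - k) * b ^ 3 + (k + 1) * b ^ 2 := by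
    intro k _; ring
  rw [Finset.sum_congr rfl expand, Finset.sum_add_distrib, ← Finset.sum_mul, ← Finset.sum_mul]
  have h1 := sum_tri K; have h2 := sum_kp1 K
  calc 6 * ((∑ k ∈ range K, (k + 1) * (K - k)) * b ^ 3 + (∑ k ∈ range K, (k + 1)) * b ^ 2)
      = (6 * ∑ k ∈ range K, (k + 1) * (K - k)) * b ^ 3
        + 3 * ((2 * ∑ k ∈ range K, (k + 1)) * b ^ 2) := by ring
    _ = _ := by rw [h1, h2]; ring



end WilfAux
theorem stmt14 (ε : ℝ) (hε0 : 0 < ε) (hε2 : ε < 1 / 2)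
    (a : ℝ) (ha : a = (6 * (1 - 2 * ε)) ^ ((1 : ℝ) / 3)) :
    ∃ K₀ : ℕ, ∀ K : ℕ, K₀ ≤ K → ∃ N : ℕ, ∀ n : ℕ, N ≤ n →
      ∀ b : ℕ, b = ⌊a * (n : ℝ) ^ ((1 : ℝ) / 3) / K⌋₊ →
        (b.factorial) ^ K ≤ wilfCount n := by
  have hε2' : (0 : ℝ) < 1 - 2 * ε := by linarith
  have ha0 : 0 ≤ a := ha ▸ Real.rpow_nonneg (by linarith) _
  have ha3 : a ^ (3 : ℕ) = 6 * (1 - 2 * ε) := by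
    rw [ha, ← Real.rpow_natCast ((6 * (1 - 2 * ε)) ^ ((1 : ℝ) / 3)) 3,
      ← Real.rpow_mul (by linarith)]
    norm_num
  refine ⟨⌈5 / ε⌉₊ + 1, fun K hK => ?_⟩
  have hK1 : 1 ≤ K := by omega
  have hK0' : (0 : ℝ) < K := by exact_mod_cast hK1
  have hK1' : (1 : ℝ) ≤ K := by exact_mod_cast hK1
  have hKε : 5 ≤ ε * K := by
    have h5 : (5 : ℝ) / ε ≤ ⌈5 / ε⌉₊ := Nat.le_ceil _
    have h6 : ((⌈5 / ε⌉₊ : ℕ) : ℝ) ≤ K := by exact_mod_cast Nat.le_of_succ_le hK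
    have h7 : (5 : ℝ) / ε ≤ K := le_trans h5 h6
    calc (5 : ℝ) = ε * (5 / ε) := by field_simp
      _ ≤ ε * K := by
          apply mul_le_mul_of_nonneg_left h7 (le_of_lt hε0)
  set C : ℝ := 3 * K * (K + 1) * a ^ 2 + 6 * K * a + 6 with hC
  have hC0 : (0 : ℝ) < C := by
    have h1 : (0 : ℝ) ≤ 3 * K * (K + 1) * a ^ 2 := by positivity
    have h2 : (0 : ℝ) ≤ 6 * K * a := by
      apply mul_nonneg _ ha0; positivity
    simp only [hC]; linarith
  set M : ℝ := max 1 (C / (6 * ε)) with hM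
  have hM0 : (0 : ℝ) ≤ M := le_trans zero_le_one (le_max_left _ _)
  refine ⟨max 1 ⌈M ^ (3 : ℕ)⌉₊, fun n hn b hb => ?_⟩
  set x : ℝ := (n : ℝ) ^ ((1 : ℝ) / 3) with hx
  have hx0 : 0 ≤ x := Real.rpow_nonneg (Nat.cast_nonneg n) _
  have hx3 : x ^ (3 : ℕ) = (n : ℝ) := by
    rw [hx, ← Real.rpow_natCast ((n : ℝ) ^ ((1 : ℝ) / 3)) 3,
      ← Real.rpow_mul (Nat.cast_nonneg n)]
    norm_num
  -- x is at least M
  have hnM : M ^ (3 : ℕ) ≤ (n : ℝ) := by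
    have h' : ⌈M ^ (3 : ℕ)⌉₊ ≤ n := le_trans (le_max_right _ _) hn
    calc M ^ (3 : ℕ) ≤ (⌈M ^ (3 : ℕ)⌉₊ : ℝ) := Nat.le_ceil _
      _ ≤ n := by exact_mod_cast h'
  have hxge : M ≤ x := by
    have h1 := Real.rpow_le_rpow (by positivity) hnM (by norm_num : (0 : ℝ) ≤ 1 / 3)
    have e : (M ^ (3 : ℕ) : ℝ) ^ ((1 : ℝ) / 3) = M := by
      rw [← Real.rpow_natCast M 3, ← Real.rpow_mul hM0]
      norm_num
    rw [e] at h1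
    exact h1
  have hx1 : (1 : ℝ) ≤ x := le_trans (le_max_left _ _) hxge
  have hεx : C ≤ 6 * ε * x := by
    have h1 : C / (6 * ε) ≤ x := le_trans (le_max_right _ _) hxge
    have h2 : C ≤ x * (6 * ε) := (div_le_iff₀ (by positivity)).mp h1
    linarith
  -- bounds on b
  have hbx : (b : ℝ) ≤ a * x / K := by
    rw [hb]
    exact Nat.floor_le (div_nonneg (mul_nonneg ha0 hx0) (le_of_lt hK0'))
  have hbK : (b : ℝ) * K ≤ a * x := by
    rw [← le_div_iff₀ hK0']
    exact hbx
  have hb0 : (0 : ℝ) ≤ (b : ℝ) := Nat.cast_nonneg b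
  have hbax : (b : ℝ) ≤ a * x := by
    have h1' : (b : ℝ) * 1 ≤ (b : ℝ) * K := mul_le_mul_of_nonneg_left hK1' hb0
    calc (b : ℝ) = (b : ℝ) * 1 := by ring
      _ ≤ (b : ℝ) * K := h1'
      _ ≤ a * x := hbK
  have hb3 : (b : ℝ) ^ 3 * (K : ℝ) ^ 3 ≤ 6 * (1 - 2 * ε) * n := by
    have h1 : ((b : ℝ) * K) ^ 3 ≤ (a * x) ^ 3 :=
      pow_le_pow_left₀ (by positivity) hbK 3
    rw [mul_pow, mul_pow] at h1
    calc (b : ℝ) ^ 3 * (K : ℝ) ^ 3 ≤ a ^ 3 * x ^ 3 := h1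
      _ = 6 * (1 - 2 * ε) * n := by rw [ha3, hx3]
  -- the polynomial inequality in K
  have hpoly : (K : ℝ) * (K + 1) * (K + 2) * (1 - 2 * ε) ≤ (K : ℝ) ^ 3 * (1 - ε) := by
    nlinarith [hKε, hK1', hε0, hε2, sq_nonneg ((K : ℝ) - 1), mul_pos hK0' hK0']
  have hn0 : (0 : ℝ) ≤ (n : ℝ) := Nat.cast_nonneg n
  -- term 1
  have hterm1 : (K : ℝ) ^ 3 * ((K : ℝ) * (K + 1) * (K + 2) * (b : ℝ) ^ 3)
      ≤ (K : ℝ) ^ 3 * ((1 - ε) * (6 * n)) := by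
    have h1 : (K : ℝ) * (K + 1) * (K + 2) * ((b : ℝ) ^ 3 * (K : ℝ) ^ 3)
        ≤ (K : ℝ) * (K + 1) * (K + 2) * (6 * (1 - 2 * ε) * n) := by
      apply mul_le_mul_of_nonneg_left hb3 (by positivity)
    have h2 : (K : ℝ) * (K + 1) * (K + 2) * (1 - 2 * ε) * (6 * n)
        ≤ (K : ℝ) ^ 3 * (1 - ε) * (6 * n) :=
      mul_le_mul_of_nonneg_right hpoly (by positivity)
    calc (K : ℝ) ^ 3 * ((K : ℝ) * (K + 1) * (K + 2) * (b : ℝ) ^ 3)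
        = (K : ℝ) * (K + 1) * (K + 2) * ((b : ℝ) ^ 3 * (K : ℝ) ^ 3) := by ring
      _ ≤ (K : ℝ) * (K + 1) * (K + 2) * (6 * (1 - 2 * ε) * n) := h1
      _ = (K : ℝ) * (K + 1) * (K + 2) * (1 - 2 * ε) * (6 * n) := by ring
      _ ≤ (K : ℝ) ^ 3 * (1 - ε) * (6 * n) := h2
      _ = (K : ℝ) ^ 3 * ((1 - ε) * (6 * n)) := by ring
  -- rest of the terms
  have hrest : 3 * (K : ℝ) * (K + 1) * (b : ℝ) ^ 2 + 6 * K * b + 6 ≤ C * x ^ 2 := by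
    have h1 : (b : ℝ) ^ 2 ≤ a ^ 2 * x ^ 2 := by
      have h1' := pow_le_pow_left₀ hb0 hbax 2
      rwa [mul_pow] at h1'
    have h2 : (b : ℝ) ≤ a * x ^ 2 := by
      have h2' : (a * x) * 1 ≤ (a * x) * x :=
        mul_le_mul_of_nonneg_left hx1 (mul_nonneg ha0 hx0)
      calc (b : ℝ) ≤ a * x := hbax
        _ = (a * x) * 1 := by ring
        _ ≤ (a * x) * x := h2'
        _ = a * x ^ 2 := by ring
    have h3 : (1 : ℝ) ≤ x ^ 2 := by
      calc (1 : ℝ) = 1 * 1 := by ring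
        _ ≤ x * x := mul_le_mul hx1 hx1 zero_le_one (le_trans zero_le_one hx1)
        _ = x ^ 2 := by ring
    have e : C * x ^ 2 = 3 * K * (K + 1) * (a ^ 2 * x ^ 2) + 6 * K * (a * x ^ 2) + 6 * x ^ 2 := by
      rw [hC]; ring
    rw [e]
    have c1 : 3 * (K : ℝ) * (K + 1) * (b : ℝ) ^ 2 ≤ 3 * K * (K + 1) * (a ^ 2 * x ^ 2) :=
      mul_le_mul_of_nonneg_left h1 (by positivity)
    have c2 : 6 * (K : ℝ) * (b : ℝ) ≤ 6 * K * (a * x ^ 2) :=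
      mul_le_mul_of_nonneg_left h2 (by positivity)
    linarith
  have hCx : C * x ^ 2 ≤ 6 * ε * n := by
    have h1 : C * x ^ 2 ≤ 6 * ε * x * x ^ 2 :=
      mul_le_mul_of_nonneg_right hεx (sq_nonneg x)
    calc C * x ^ 2 ≤ 6 * ε * x * x ^ 2 := h1
      _ = 6 * ε * x ^ (3 : ℕ) := by ring
      _ = 6 * ε * n := by rw [hx3]
  -- combine
  have hfinR : (K : ℝ) ^ 3 *
      ((K : ℝ) * (K + 1) * (K + 2) * (b : ℝ) ^ 3 + 3 * ((K : ℝ) * (K + 1)) * (b : ℝ) ^ 2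
        + 6 * ((K : ℝ) * b) + 6)
      ≤ (K : ℝ) ^ 3 * (6 * n) := by
    have hr : (K : ℝ) ^ 3 * (3 * ((K : ℝ) * (K + 1)) * (b : ℝ) ^ 2 + 6 * ((K : ℝ) * b) + 6)
        ≤ (K : ℝ) ^ 3 * (6 * ε * n) := by
      apply mul_le_mul_of_nonneg_left _ (by positivity)
      calc 3 * ((K : ℝ) * (K + 1)) * (b : ℝ) ^ 2 + 6 * ((K : ℝ) * b) + 6
          = 3 * (K : ℝ) * (K + 1) * (b : ℝ) ^ 2 + 6 * K * b + 6 := by ring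
        _ ≤ C * x ^ 2 := hrest
        _ ≤ 6 * ε * n := hCx
    linarith [hterm1, hr]
  have hfinR' : (K : ℝ) * (K + 1) * (K + 2) * (b : ℝ) ^ 3 + 3 * ((K : ℝ) * (K + 1)) * (b : ℝ) ^ 2
      + 6 * ((K : ℝ) * b) + 6 ≤ 6 * n :=
    le_of_mul_le_mul_left hfinR (by positivity)
  -- back to ℕ
  have hTe : (6 : ℝ) * (WilfAux.Tmax b K : ℝ)
      = (K : ℝ) * (K + 1) * (K + 2) * (b : ℝ) ^ 3 + 3 * ((K : ℝ) * (K + 1)) * (b : ℝ) ^ 2 := by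
    exact_mod_cast congrArg (Nat.cast : ℕ → ℝ) (WilfAux.Tmax_eq b K)
  have hfinN : 6 * WilfAux.Tmax b K + 6 * (K * b) + 6 ≤ 6 * n := by
    have hcast : (6 : ℝ) * (WilfAux.Tmax b K : ℝ) + 6 * ((K : ℝ) * b) + 6 ≤ 6 * (n : ℝ) := by
      rw [hTe]; linarith [hfinR']
    exact_mod_cast hcast
  have hfin : WilfAux.Tmax b K + K * b + 1 ≤ n := by omega
  exact WilfAux.key_s14 b K n hfin
end
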